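/- arXiv:1205.4155 — 3 statements merged into one kernel-verified Lean document; each statement's English description precedes it below -/
import Mathlib

section
/- Let f be a continuous self-map of the Cantor space, Q a partition of the Cantor space into clopen sets, G a finite digraph in which every vertex has an outgoing edge, and φ a vertex-surjective digraph homomorphism from G onto Γ(f,Q). Then there exist a partition P refining Q with refinement map ν : P → Q, and a bijection ψ from P onto the vertex set of G with ν = φ ∘ ψ, and a continuous self-map g of the Cantor space such that ψ : Γ(g,P) → G is a digraph isomorphism; moreover if every vertex of G also has an incoming edge, g can be taken to be a homeomorphism. -/
noncomputable def cantorDist (σ τ : ℕ → Bool) : ℝ :=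
  letI := Classical.propDecidable (∃ n, σ n ≠ τ n)
  if h : ∃ n, σ n ≠ τ n then 1 / (Nat.find h + 1) else 0

def IsPartition (P : Finset (Set (ℕ → Bool))) : Prop :=
  (∀ a ∈ P, IsClopen a ∧ a.Nonempty) ∧
  (∀ a ∈ P, ∀ b ∈ P, a ≠ b → Disjoint a b) ∧
  ⋃₀ (P : Set (Set (ℕ → Bool))) = Set.univ

noncomputable def cantorDiam (A : Set (ℕ → Bool)) : ℝ :=
  sSup {r | ∃ σ ∈ A, ∃ τ ∈ A, r = cantorDist σ τ}

noncomputable def mesh (C : Set (Set (ℕ → Bool))) : ℝ :=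
  sSup (cantorDiam '' C)

def gammaEdge (f : (ℕ → Bool) → (ℕ → Bool)) (a b : Set (ℕ → Bool)) : Prop :=
  (f '' a ∩ b).Nonempty

def balloonEdge (s m : ℕ) (a b : Fin (s + m)) : Prop :=
  b.val = a.val + 1 ∨ (a.val = s + m - 1 ∧ b.val = s)

def dumbbellEdge (r s t : ℕ) (a b : Fin (r + s + t)) : Prop :=
  (b.val = a.val + 1 ∧ a.val + 1 ≠ r) ∨
  (a.val = r - 1 ∧ b.val = 0) ∨
  (a.val = 0 ∧ b.val = r) ∨
  (a.val = r + s + t - 1 ∧ b.val = r + s)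

local notation "K" => (ℕ → Bool)

def cyl (n : ℕ) (v : ℕ → Bool) : Set K := {σ | ∀ i < n, σ i = v i}

lemma isClopen_cyl (n : ℕ) (v : K) : IsClopen (cyl n v) := by
  have : cyl n v = ⋂ i ∈ Finset.range n, (fun σ : K => σ i) ⁻¹' {v i} := by
    ext σ; simp [cyl]
  rw [this]
  exact Set.Finite.isClopen_biInter (Finset.finite_toSet _)
    (fun i _ => (isClopen_discrete {v i}).preimage (continuous_apply i))

def Det (n : ℕ) (C : Set K) : Prop :=
  ∀ σ ∈ C, ∀ τ : K, (∀ i < n, τ i = σ i) → τ ∈ C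

lemma det_isClopen {n : ℕ} {C : Set K} (h : Det n C) : IsClopen C := by
  classical
  set r : K → (Fin n → Bool) := fun σ i => σ i.val with hr
  have hCr : C = r ⁻¹' (r '' C) := by
    apply Set.Subset.antisymm (Set.subset_preimage_image r C)
    rintro σ ⟨τ, hτ, hrτ⟩
    exact h τ hτ σ (fun i hi => (congrFun hrτ ⟨i, hi⟩ : _).symm)
  rw [hCr]
  exact (isClopen_discrete _).preimage (continuous_pi fun i => continuous_apply i.val)

lemma isClopen_det {C : Set K} (hC : IsClopen C) : ∃ n, Det n C := by
  classical
  by_cases hne : C.Nonempty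
  · -- for each σ ∈ C get m with cyl m σ ⊆ C
    have key : ∀ σ : K, σ ∈ C → ∃ m, cyl m σ ⊆ C := by
      intro σ hσ
      have hdir : Directed (· ⊇ ·) (fun m => cyl m σ) := by
        intro a b
        exact ⟨max a b, fun τ hτ i hi => hτ i (lt_of_lt_of_le hi (le_max_left a b)),
          fun τ hτ i hi => hτ i (lt_of_lt_of_le hi (le_max_right a b))⟩
      have hint : (⋂ m, cyl m σ) = {σ} := by
        apply Set.Subset.antisymm
        · intro τ hτ
          have : ∀ i, τ i = σ i := fun i => (Set.mem_iInter.mp hτ (i+1)) i (Nat.lt_succ_self i)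
          simp [funext this]
        · rintro τ rfl
          exact Set.mem_iInter.mpr fun m i _ => rfl
      apply exists_subset_nhds_of_isCompact' hdir
        (fun m => (isClopen_cyl m σ).isClosed.isCompact)
        (fun m => (isClopen_cyl m σ).isClosed)
      intro x hx
      rw [hint] at hx
      rcases hx with rfl
      exact hC.isOpen.mem_nhds hσ
    choose m hm using key
    -- compactness: finite subcover
    obtain ⟨t, ht⟩ := hC.isClosed.isCompact.elim_finite_subcover
      (fun σ : ↥C => cyl (m σ.val σ.prop) σ.val)
      (fun σ => (isClopen_cyl _ _).isOpen)
      (fun σ hσ => Set.mem_iUnion.mpr ⟨⟨σ, hσ⟩, fun i _ => rfl⟩)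
    refine ⟨t.sup (fun σ => m σ.val σ.prop), ?_⟩
    intro σ hσ τ hτ
    obtain ⟨σ', hσ't, hσ'⟩ := Set.mem_iUnion₂.mp (ht hσ)
    apply hm σ'.val σ'.prop
    intro i hi
    have hin : i < t.sup (fun σ => m σ.val σ.prop) :=
      lt_of_lt_of_le hi (Finset.le_sup (f := fun σ : ↥C => m σ.val σ.prop) hσ't)
    rw [hτ i hin]
    exact hσ' i hi
  · exact ⟨0, fun σ hσ => absurd ⟨σ, hσ⟩ hne⟩

lemma cont_of_local {X Y : Type*} [TopologicalSpace X] [TopologicalSpace Y] {g : X → Y}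
    (h : ∀ x, ∃ U, IsOpen U ∧ x ∈ U ∧ ContinuousOn g U) : Continuous g := by
  rw [continuous_iff_continuousAt]
  intro x
  obtain ⟨U, hU, hx, hg⟩ := h x
  exact hg.continuousAt (hU.mem_nhds hx)

def kcons (b : Bool) (τ : K) : K := fun m => Nat.casesOn m b τ

lemma continuous_kcons (b : Bool) : Continuous (kcons b) := by
  apply continuous_pi
  intro m
  cases m with
  | zero => exact continuous_const
  | succ k => exact continuous_apply k

instance cantorCompact : CompactSpace K := by infer_instance

lemma clopen_compactSpace {C : Set K} (hC : IsClopen C) : CompactSpace ↥C :=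
  isCompact_iff_compactSpace.mp hC.isClosed.isCompact


/-- cylinder is homeomorphic to Cantor space -/
lemma cyl_homeo (n : ℕ) (v : K) : Nonempty (↥(cyl n v) ≃ₜ K) := by
  classical
  haveI := clopen_compactSpace (isClopen_cyl n v)
  refine ⟨Continuous.homeoOfEquivCompactToT2 (f := ?_) ?_⟩
  · refine ⟨fun σ k => σ.val (n + k),
      fun τ => ⟨fun i => if h : i < n then v i else τ (i - n), fun i hi => by simp [hi]⟩,
      ?_, ?_⟩
    · intro σ
      apply Subtype.ext
      funext i
      by_cases h : i < n
      · show (if h : i < n then v i else σ.val (n + (i - n))) = σ.val i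
        rw [dif_pos h]
        exact (σ.prop i h).symm
      · show (if h : i < n then v i else σ.val (n + (i - n))) = σ.val i
        rw [dif_neg h]
        have hni : n + (i - n) = i := by omega
        rw [hni]
    · intro τ
      funext k
      show (if h : n + k < n then v (n + k) else τ (n + k - n)) = τ k
      rw [dif_neg (by omega)]
      congr 1
      omega
  · exact continuous_pi fun k => (continuous_apply (n + k)).comp continuous_subtype_val

noncomputable def joinF {A B : Set K} (eA : ↥A ≃ₜ K) (eB : ↥B ≃ₜ K) (σ : ↥(A ∪ B)) : K :=
  letI : Decidable (σ.val ∈ A) := Classical.propDecidable _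
  if h : σ.val ∈ A then kcons true (eA ⟨σ.val, h⟩)
  else kcons false (eB ⟨σ.val, σ.prop.resolve_left h⟩)

noncomputable def joinG {A B : Set K} (eA : ↥A ≃ₜ K) (eB : ↥B ≃ₜ K) (τ : K) : ↥(A ∪ B) :=
  letI : Decidable (τ 0 = true) := Classical.propDecidable _
  if τ 0 = true then ⟨(eA.symm (fun k => τ (k+1))).val, Or.inl (eA.symm _).prop⟩
  else ⟨(eB.symm (fun k => τ (k+1))).val, Or.inr (eB.symm _).prop⟩

/-- join two disjoint clopen pieces each homeomorphic to Cantor space -/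
lemma join_homeo {A B : Set K} (hA : IsClopen A) (hB : IsClopen B) (hAB : Disjoint A B)
    (eA : ↥A ≃ₜ K) (eB : ↥B ≃ₜ K) : Nonempty (↥(A ∪ B) ≃ₜ K) := by
  classical
  haveI := clopen_compactSpace (hA.union hB)
  have hGF : ∀ σ, joinG eA eB (joinF eA eB σ) = σ := by
    intro σ
    by_cases h : σ.val ∈ A
    · simp only [joinF]
      rw [dif_pos h]
      simp only [joinG]
      rw [if_pos (show kcons true (eA ⟨σ.val, h⟩) 0 = true from rfl)]
      apply Subtype.ext
      show (eA.symm (eA ⟨σ.val, h⟩)).val = σ.val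
      rw [eA.symm_apply_apply]
    · simp only [joinF]
      rw [dif_neg h]
      simp only [joinG]
      rw [if_neg (show ¬ (kcons false (eB ⟨σ.val, σ.prop.resolve_left h⟩) 0 = true) by
        simp [kcons])]
      apply Subtype.ext
      show (eB.symm (eB ⟨σ.val, σ.prop.resolve_left h⟩)).val = σ.val
      rw [eB.symm_apply_apply]
  have hFG : ∀ τ, joinF eA eB (joinG eA eB τ) = τ := by
    intro τ
    by_cases h0 : τ 0 = true
    · have hg : joinG eA eB τ
          = ⟨(eA.symm (fun k => τ (k+1))).val, Or.inl (eA.symm _).prop⟩ := by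
        simp only [joinG]; rw [if_pos h0]
      rw [hg]
      simp only [joinF]
      rw [dif_pos (show (eA.symm (fun k => τ (k+1))).val ∈ A from (eA.symm _).prop)]
      show kcons true (eA (eA.symm (fun k => τ (k+1)))) = τ
      rw [eA.apply_symm_apply]
      funext m
      cases m with
      | zero => exact h0.symm
      | succ k => rfl
    · have hg : joinG eA eB τ
          = ⟨(eB.symm (fun k => τ (k+1))).val, Or.inr (eB.symm _).prop⟩ := by
        simp only [joinG]; rw [if_neg h0]
      rw [hg]
      simp only [joinF]
      have hmem : (eB.symm (fun k => τ (k+1))).val ∈ B := (eB.symm _).prop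
      rw [dif_neg (fun hc => Set.disjoint_left.mp hAB hc hmem)]
      show kcons false (eB (eB.symm (fun k => τ (k+1)))) = τ
      rw [eB.apply_symm_apply]
      funext m
      cases m with
      | zero => exact ((Bool.not_eq_true _).mp h0).symm
      | succ k => rfl
  have hFcont : Continuous (joinF eA eB) := by
    apply cont_of_local
    intro σ
    by_cases h : σ.val ∈ A
    · refine ⟨Subtype.val ⁻¹' A, hA.isOpen.preimage continuous_subtype_val, h, ?_⟩
      rw [continuousOn_iff_continuous_restrict]
      have heq : (Subtype.val ⁻¹' A).restrict (joinF eA eB)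
          = fun p => kcons true (eA ⟨p.val.val, p.prop⟩) := by
        funext p
        show joinF eA eB p.val = _
        simp only [joinF]
        rw [dif_pos (show ((p : ↥(A ∪ B)) : ℕ → Bool) ∈ A from p.prop)]
      rw [show (Subtype.val ⁻¹' A).domRestrict (joinF eA eB) = _ from heq]
      exact (continuous_kcons true).comp (eA.continuous.comp
        (Continuous.subtype_mk (continuous_subtype_val.comp continuous_subtype_val) _))
    · have hB' : σ.val ∈ B := σ.prop.resolve_left h
      refine ⟨Subtype.val ⁻¹' B, hB.isOpen.preimage continuous_subtype_val, hB', ?_⟩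
      rw [continuousOn_iff_continuous_restrict]
      have heq : (Subtype.val ⁻¹' B).restrict (joinF eA eB)
          = fun p => kcons false (eB ⟨p.val.val, p.prop⟩) := by
        funext p
        show joinF eA eB p.val = _
        simp only [joinF]
        rw [dif_neg (fun hc => Set.disjoint_left.mp hAB hc
          (show ((p : ↥(A ∪ B)) : ℕ → Bool) ∈ B from p.prop))]
      rw [show (Subtype.val ⁻¹' B).domRestrict (joinF eA eB) = _ from heq]
      exact (continuous_kcons false).comp (eB.continuous.comp
        (Continuous.subtype_mk (continuous_subtype_val.comp continuous_subtype_val) _))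
  exact ⟨Continuous.homeoOfEquivCompactToT2
    (f := ⟨joinF eA eB, joinG eA eB, hGF, hFG⟩) hFcont⟩

noncomputable def emb (n : ℕ) (v : Fin n → Bool) : K :=
  fun i => if h : i < n then v ⟨i, h⟩ else false

noncomputable def SS (n : ℕ) (C : Set K) : Finset (Fin n → Bool) :=
  letI := Classical.propDecidable
  Finset.univ.filter (fun v => emb n v ∈ C)

lemma mem_SS {n : ℕ} {C : Set K} {v : Fin n → Bool} : v ∈ SS n C ↔ emb n v ∈ C := by
  simp [SS]

lemma trunc_mem_SS {n : ℕ} {C : Set K} (hdet : Det n C) {σ : K} (hσ : σ ∈ C) :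
    (fun i : Fin n => σ i.val) ∈ SS n C := by
  rw [mem_SS]
  apply hdet σ hσ
  intro i hi
  simp [emb, hi]

lemma det_homeo : ∀ (k n : ℕ) (C : Set K), Det n C → C.Nonempty → (SS n C).card ≤ k →
    Nonempty (↥C ≃ₜ K) := by
  intro k
  induction k with
  | zero =>
    intro n C hdet hne hcard
    obtain ⟨σ, hσ⟩ := hne
    have := Finset.card_pos.mpr ⟨_, trunc_mem_SS hdet hσ⟩
    omega
  | succ k ih =>
    intro n C hdet hne hcard
    obtain ⟨σ, hσ⟩ := hne
    set v : Fin n → Bool := fun i => σ i.val with hv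
    have hvS : v ∈ SS n C := trunc_mem_SS hdet hσ
    set A : Set K := cyl n (emb n v) with hA
    have hAC : A ⊆ C := fun τ hτ => hdet _ (mem_SS.mp hvS) τ hτ
    by_cases hsub : C ⊆ A
    · obtain ⟨e⟩ := cyl_homeo n (emb n v)
      exact ⟨(Homeomorph.setCongr (Set.Subset.antisymm hsub hAC)).trans e⟩
    · rw [Set.not_subset] at hsub
      obtain ⟨σ₀, hσ₀C, hσ₀A⟩ := hsub
      set B : Set K := C \ A with hB
      have hdetA : Det n A := by
        intro x hx τ hτ i hi
        rw [hτ i hi]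
        exact hx i hi
      have hdetB : Det n B := by
        rintro x ⟨hxC, hxA⟩ τ hτ
        refine ⟨hdet x hxC τ hτ, fun hτA => hxA ?_⟩
        intro i hi
        rw [← hτ i hi]
        exact hτA i hi
      have hBne : B.Nonempty := ⟨σ₀, hσ₀C, hσ₀A⟩
      -- SS n A ⊆ {v}
      have hSA : SS n A ⊆ {v} := by
        intro w hw
        rw [mem_SS] at hw
        rw [Finset.mem_singleton]
        funext j
        have := hw j.val j.isLt
        simpa [emb, j.isLt] using this
      have hSBsub : SS n B ⊆ (SS n C).erase v := by
        intro w hw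
        rw [mem_SS] at hw
        rw [Finset.mem_erase, mem_SS]
        refine ⟨?_, hw.1⟩
        rintro rfl
        exact hw.2 (fun i hi => rfl)
      have hSBne : (SS n B).Nonempty := ⟨_, trunc_mem_SS hdetB hBne.choose_spec⟩
      have hcard2 : 2 ≤ (SS n C).card := by
        have h1 : ((SS n C).erase v).Nonempty := hSBne.mono hSBsub
        have := Finset.card_erase_of_mem hvS
        have := Finset.card_pos.mpr h1
        omega
      have hk1 : 1 ≤ k := by omega
      obtain ⟨eA⟩ := ih n A hdetA ⟨emb n v, fun i hi => rfl⟩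
        (le_trans (Finset.card_le_card hSA) (by simpa using hk1))
      obtain ⟨eB⟩ := ih n B hdetB hBne
        (by
          have := Finset.card_le_card hSBsub
          have := Finset.card_erase_of_mem hvS
          omega)
      obtain ⟨e⟩ := join_homeo (det_isClopen hdetA) (det_isClopen hdetB)
        (Set.disjoint_sdiff_right) eA eB
      exact ⟨(Homeomorph.setCongr (by rw [Set.union_diff_cancel hAC])).symm.trans e⟩  -- check

lemma clopen_homeo_cantor {C : Set K} (hC : IsClopen C) (hne : C.Nonempty) :
    Nonempty (↥C ≃ₜ K) := by
  obtain ⟨n, hdet⟩ := isClopen_det hC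
  exact det_homeo (SS n C).card n C hdet hne le_rfl

lemma clopen_homeo {A B : Set K} (hA : IsClopen A) (hAne : A.Nonempty)
    (hB : IsClopen B) (hBne : B.Nonempty) : Nonempty (↥A ≃ₜ ↥B) := by
  obtain ⟨eA⟩ := clopen_homeo_cantor hA hAne
  obtain ⟨eB⟩ := clopen_homeo_cantor hB hBne
  exact ⟨eA.trans eB.symm⟩

lemma split_two {C : Set K} (hC : IsClopen C) (hne : C.Nonempty) :
    ∃ C₁ C₂ : Set K, IsClopen C₁ ∧ C₁.Nonempty ∧ IsClopen C₂ ∧ C₂.Nonempty ∧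
      Disjoint C₁ C₂ ∧ C₁ ∪ C₂ = C := by
  obtain ⟨n, hdet⟩ := isClopen_det hC
  obtain ⟨σ, hσ⟩ := hne
  set τ : K := fun i => if i = n then !(σ n) else σ i with hτdef
  have hτC : τ ∈ C := hdet σ hσ τ (fun i hi => by simp [hτdef, Nat.ne_of_lt hi])
  refine ⟨C ∩ (fun x : K => x n) ⁻¹' {σ n}, C ∩ (fun x : K => x n) ⁻¹' {σ n}ᶜ,
    hC.inter ((isClopen_discrete _).preimage (continuous_apply n)),
    ⟨σ, hσ, rfl⟩,
    hC.inter ((isClopen_discrete _).preimage (continuous_apply n)),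
    ⟨τ, hτC, by simp [hτdef]⟩, ?_, ?_⟩
  · exact Set.disjoint_left.mpr (fun x hx hx' => hx'.2 hx.2)
  · rw [Set.preimage_compl, ← Set.inter_union_distrib_left, Set.union_compl_self, Set.inter_univ]

universe u

lemma split_card : ∀ (k : ℕ) (ι : Type u) [Fintype ι], Fintype.card ι = k + 1 →
    ∀ {C : Set K}, IsClopen C → C.Nonempty →
    ∃ A : ι → Set K, (∀ i, IsClopen (A i)) ∧ (∀ i, (A i).Nonempty) ∧
      (Pairwise fun i j => Disjoint (A i) (A j)) ∧ (⋃ i, A i) = C := by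
  intro k
  induction k with
  | zero =>
    intro ι _ hcard C hC hne
    obtain ⟨x, hx⟩ := Fintype.card_eq_one_iff.mp hcard
    haveI : Nonempty ι := ⟨x⟩
    refine ⟨fun _ => C, fun _ => hC, fun _ => hne, ?_, Set.iUnion_const C⟩
    intro i j hij
    exact absurd ((hx i).trans (hx j).symm) hij
  | succ k ih =>
    intro ι _ hcard C hC hne
    haveI : Nonempty ι := Fintype.card_pos_iff.mp (by omega)
    classical
    obtain ⟨i₀⟩ := ‹Nonempty ι›
    obtain ⟨C₁, C₂, h1, h1ne, h2, h2ne, hdis, huni⟩ := split_two hC hne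
    have hcard' : Fintype.card {i : ι // ¬ (i = i₀)} = k + 1 := by
      have h1 := Fintype.card_subtype_compl (fun i : ι => i = i₀)
      have h2 : Fintype.card {i : ι // i = i₀} = 1 := Fintype.card_subtype_eq i₀
      omega
    obtain ⟨A', hA'c, hA'ne, hA'dis, hA'uni⟩ := ih {i : ι // i ≠ i₀} hcard' h2 h2ne
    have hA'sub : ∀ a, A' a ⊆ C₂ := fun a => hA'uni ▸ Set.subset_iUnion A' a
    refine ⟨fun i => if h : i = i₀ then C₁ else A' ⟨i, h⟩, ?_, ?_, ?_, ?_⟩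
    · intro i
      by_cases h : i = i₀ <;> simp only [h, dif_pos, dif_neg, not_false_iff]
      exacts [h1, hA'c _]
    · intro i
      by_cases h : i = i₀ <;> simp only [h, dif_pos, dif_neg, not_false_iff]
      exacts [h1ne, hA'ne _]
    · intro i j hij
      by_cases hi : i = i₀ <;> by_cases hj : j = i₀ <;>
        simp only [hi, hj, dif_pos, dif_neg, not_false_iff]
      · exact absurd (hi.trans hj.symm) hij
      · exact hdis.mono_right (hA'sub _)
      · exact (hdis.mono_right (hA'sub _)).symm
      · exact hA'dis (fun hc => hij (congrArg Subtype.val hc))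
    · apply Set.Subset.antisymm
      · apply Set.iUnion_subset
        intro i
        by_cases h : i = i₀ <;> simp only [h, dif_pos, dif_neg, not_false_iff]
        · rw [← huni]; exact Set.subset_union_left
        · exact (hA'sub _).trans (by rw [← huni]; exact Set.subset_union_right)
      · intro x hx
        rw [← huni] at hx
        rcases hx with hx | hx
        · exact Set.mem_iUnion.mpr ⟨i₀, by simp only [dif_pos]; exact hx⟩
        · rw [← hA'uni] at hx
          obtain ⟨a, ha⟩ := Set.mem_iUnion.mp hx
          exact Set.mem_iUnion.mpr ⟨a.val, by rw [dif_neg a.prop]; exact ha⟩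

lemma split_pieces (ι : Type u) [Fintype ι] [Nonempty ι] {C : Set K}
    (hC : IsClopen C) (hne : C.Nonempty) :
    ∃ A : ι → Set K, (∀ i, IsClopen (A i)) ∧ (∀ i, (A i).Nonempty) ∧
      (Pairwise fun i j => Disjoint (A i) (A j)) ∧ (⋃ i, A i) = C := by
  have : Fintype.card ι = (Fintype.card ι - 1) + 1 := by
    have := Fintype.card_pos_iff.mpr ‹Nonempty ι›
    omega
  exact split_card _ ι this hC hne

lemma glue_homeo {ι : Type u} (A B : ι → Set K)
    (hAc : ∀ i, IsClopen (A i)) (hAne : ∀ i, (A i).Nonempty)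
    (hAdis : Pairwise fun i j => Disjoint (A i) (A j)) (hAcov : (⋃ i, A i) = Set.univ)
    (hBc : ∀ i, IsClopen (B i)) (hBne : ∀ i, (B i).Nonempty)
    (hBdis : Pairwise fun i j => Disjoint (B i) (B j)) (hBcov : (⋃ i, B i) = Set.univ) :
    ∃ g : K ≃ₜ K, ∀ i, g '' (A i) = B i := by
  classical
  have e : ∀ i, ↥(A i) ≃ₜ ↥(B i) := fun i =>
    (clopen_homeo (hAc i) (hAne i) (hBc i) (hBne i)).some
  have memA : ∀ σ : K, ∃ i, σ ∈ A i := fun σ =>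
    Set.mem_iUnion.mp (hAcov ▸ Set.mem_univ σ)
  have memB : ∀ τ : K, ∃ i, τ ∈ B i := fun τ =>
    Set.mem_iUnion.mp (hBcov ▸ Set.mem_univ τ)
  set iA : K → ι := fun σ => Classical.choose (memA σ) with hiA
  set iB : K → ι := fun τ => Classical.choose (memB τ) with hiB
  have hiAmem : ∀ σ, σ ∈ A (iA σ) := fun σ => Classical.choose_spec (memA σ)
  have hiBmem : ∀ τ, τ ∈ B (iB τ) := fun τ => Classical.choose_spec (memB τ)
  have hiAuniq : ∀ σ i, σ ∈ A i → iA σ = i := by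
    intro σ i h
    by_contra hne
    exact Set.disjoint_left.mp (hAdis hne) (hiAmem σ) h
  have hiBuniq : ∀ τ i, τ ∈ B i → iB τ = i := by
    intro τ i h
    by_contra hne
    exact Set.disjoint_left.mp (hBdis hne) (hiBmem τ) h
  set F : K → K := fun σ => ((e (iA σ)) ⟨σ, hiAmem σ⟩).val with hFdef
  set G : K → K := fun τ => ((e (iB τ)).symm ⟨τ, hiBmem τ⟩).val with hGdef
  have hF : ∀ (σ : K) (i : ι) (h : σ ∈ A i), F σ = ((e i) ⟨σ, h⟩).val := by
    intro σ i h
    have hu := hiAuniq σ i h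
    subst hu
    rfl
  have hG : ∀ (τ : K) (i : ι) (h : τ ∈ B i), G τ = ((e i).symm ⟨τ, h⟩).val := by
    intro τ i h
    have hu := hiBuniq τ i h
    subst hu
    rfl
  have hGF : ∀ σ, G (F σ) = σ := by
    intro σ
    set i := iA σ
    have h1 : F σ = ((e i) ⟨σ, hiAmem σ⟩).val := rfl
    have h2 : F σ ∈ B i := h1 ▸ ((e i) ⟨σ, hiAmem σ⟩).prop
    rw [hG (F σ) i h2]
    have h3 : (⟨F σ, h2⟩ : ↥(B i)) = (e i) ⟨σ, hiAmem σ⟩ := Subtype.ext h1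
    rw [h3, Homeomorph.symm_apply_apply]
  have hFG : ∀ τ, F (G τ) = τ := by
    intro τ
    set i := iB τ
    have h1 : G τ = ((e i).symm ⟨τ, hiBmem τ⟩).val := rfl
    have h2 : G τ ∈ A i := h1 ▸ ((e i).symm ⟨τ, hiBmem τ⟩).prop
    rw [hF (G τ) i h2]
    have h3 : (⟨G τ, h2⟩ : ↥(A i)) = (e i).symm ⟨τ, hiBmem τ⟩ := Subtype.ext h1
    rw [h3, Homeomorph.apply_symm_apply]
  have hFcont : Continuous F := by
    apply cont_of_local
    intro σ
    refine ⟨A (iA σ), (hAc _).isOpen, hiAmem σ, ?_⟩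
    rw [continuousOn_iff_continuous_restrict]
    have heq : (A (iA σ)).restrict F = fun p => ((e (iA σ)) ⟨p.val, p.prop⟩).val := by
      funext p
      exact hF p.val (iA σ) p.prop
    rw [show (A (iA σ)).domRestrict F = _ from heq]
    exact continuous_subtype_val.comp ((e (iA σ)).continuous.comp
      (Continuous.subtype_mk continuous_subtype_val _))
  refine ⟨Continuous.homeoOfEquivCompactToT2 (f := ⟨F, G, hGF, hFG⟩) hFcont, ?_⟩
  intro i
  apply Set.Subset.antisymm
  · rintro τ ⟨σ, hσ, rfl⟩
    show F σ ∈ B i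
    rw [hF σ i hσ]
    exact ((e i) ⟨σ, hσ⟩).prop
  · intro τ hτ
    refine ⟨((e i).symm ⟨τ, hτ⟩).val, ((e i).symm ⟨τ, hτ⟩).prop, ?_⟩
    show F _ = τ
    rw [hF _ i ((e i).symm ⟨τ, hτ⟩).prop]
    have : (⟨((e i).symm ⟨τ, hτ⟩).val, ((e i).symm ⟨τ, hτ⟩).prop⟩ : ↥(A i))
        = (e i).symm ⟨τ, hτ⟩ := rfl
    rw [this, Homeomorph.apply_symm_apply]


theorem approximation_refine {V : Type*} [Fintype V] (E : V → V → Prop)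
    (hE : ∀ x : V, ∃ y : V, E x y)
    (f : (ℕ → Bool) → (ℕ → Bool)) (hf : Continuous f)
    (Q : Finset (Set (ℕ → Bool))) (hQ : IsPartition Q)
    (φ : V → {a // a ∈ Q}) (hφsurj : Function.Surjective φ)
    (hφhom : ∀ x y : V, E x y → gammaEdge f (φ x).val (φ y).val) :
    ∃ P : Finset (Set (ℕ → Bool)), IsPartition P ∧
      ∃ (ν : {a // a ∈ P} → {a // a ∈ Q}) (ψ : {a // a ∈ P} ≃ V),
        (∀ a : {a // a ∈ P}, a.val ⊆ (ν a).val) ∧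
        (∀ a : {a // a ∈ P}, ν a = φ (ψ a)) ∧
        (∃ g : (ℕ → Bool) → (ℕ → Bool), Continuous g ∧
          ∀ a b : {a // a ∈ P}, gammaEdge g a.val b.val ↔ E (ψ a) (ψ b)) ∧
        ((∀ x : V, ∃ y : V, E y x) → ∃ g : (ℕ → Bool) ≃ₜ (ℕ → Bool),
          ∀ a b : {a // a ∈ P}, gammaEdge (⇑g) a.val b.val ↔ E (ψ a) (ψ b)) := by
  classical
  obtain ⟨hQcn, hQdis, hQcov⟩ := hQ
  haveI hfib : ∀ q : {a // a ∈ Q}, Nonempty {x : V // φ x = q} := by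
    intro q
    obtain ⟨x, hx⟩ := hφsurj q
    exact ⟨⟨x, hx⟩⟩
  have hsplit : ∀ q : {a // a ∈ Q}, ∃ A : {x : V // φ x = q} → Set (ℕ → Bool),
      (∀ i, IsClopen (A i)) ∧ (∀ i, (A i).Nonempty) ∧
      (Pairwise fun i j => Disjoint (A i) (A j)) ∧ (⋃ i, A i) = q.val := fun q =>
    split_pieces _ (hQcn q.val q.prop).1 (hQcn q.val q.prop).2
  choose S hSc hSne hSdis hSuni using hsplit
  have hStrans : ∀ (q q' : {a // a ∈ Q}) (hq : q = q') (a : {x : V // φ x = q})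
      (b : {x : V // φ x = q'}), a.val = b.val → S q a = S q' b := by
    rintro q q' rfl a b h
    exact congrArg (S q) (Subtype.ext h)
  set Px : V → Set (ℕ → Bool) := fun x => S (φ x) ⟨x, rfl⟩ with hPxdef
  have hPxc : ∀ x, IsClopen (Px x) := fun x => hSc _ _
  have hPxne : ∀ x, (Px x).Nonempty := fun x => hSne _ _
  have hPxsub : ∀ x, Px x ⊆ (φ x).val := fun x =>
    (hSuni (φ x)) ▸ Set.subset_iUnion (S (φ x)) ⟨x, rfl⟩
  have hPxdis : ∀ x y : V, x ≠ y → Disjoint (Px x) (Px y) := by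
    intro x y hxy
    by_cases hq : φ x = φ y
    · have h2 : S (φ y) (⟨y, rfl⟩ : {x_1 : V // φ x_1 = φ y}) = S (φ x) ⟨y, hq.symm⟩ :=
        hStrans (φ y) (φ x) hq.symm ⟨y, rfl⟩ ⟨y, hq.symm⟩ rfl
      show Disjoint (S (φ x) ⟨x, rfl⟩) (S (φ y) ⟨y, rfl⟩)
      rw [h2]
      exact hSdis (φ x) (fun hcc => hxy (congrArg Subtype.val hcc))
    · refine Set.disjoint_of_subset (hPxsub x) (hPxsub y) ?_
      exact hQdis _ (φ x).prop _ (φ y).prop (fun h => hq (Subtype.ext h))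
  have hPxcov : (⋃ x, Px x) = Set.univ := by
    apply Set.eq_univ_of_forall
    intro σ
    have : σ ∈ ⋃₀ (Q : Set (Set (ℕ → Bool))) := hQcov ▸ Set.mem_univ σ
    obtain ⟨q₀, hq₀Q, hσq₀⟩ := this
    set q : {a // a ∈ Q} := ⟨q₀, hq₀Q⟩
    have : σ ∈ ⋃ i, S q i := (hSuni q).symm ▸ hσq₀
    obtain ⟨a, ha⟩ := Set.mem_iUnion.mp this
    refine Set.mem_iUnion.mpr ⟨a.val, ?_⟩
    have : Px a.val = S q a := hStrans (φ a.val) q a.prop ⟨a.val, rfl⟩ a rfl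
    rw [this]
    exact ha
  have hPxmem_eq : ∀ (σ : ℕ → Bool) (x y : V), σ ∈ Px x → σ ∈ Px y → x = y := by
    intro σ x y hx hy
    by_contra hne
    exact Set.disjoint_left.mp (hPxdis x y hne) hx hy
  have hPxinj : Function.Injective Px := by
    intro x y h
    obtain ⟨σ, hσ⟩ := hPxne x
    exact hPxmem_eq σ x y hσ (h ▸ hσ)
  set P : Finset (Set (ℕ → Bool)) := Finset.image Px Finset.univ with hPdef
  have hmemP : ∀ x, Px x ∈ P := fun x => Finset.mem_image_of_mem Px (Finset.mem_univ x)
  set eqv : V ≃ {a // a ∈ P} := Equiv.ofBijective (fun x => ⟨Px x, hmemP x⟩)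
    ⟨fun x y h => hPxinj (congrArg Subtype.val h), fun a => by
      obtain ⟨x, _, hx⟩ := Finset.mem_image.mp a.prop
      exact ⟨x, Subtype.ext hx⟩⟩ with heqv
  set ψ : {a // a ∈ P} ≃ V := eqv.symm with hψ
  have hkey : ∀ a : {a // a ∈ P}, Px (ψ a) = a.val := fun a =>
    congrArg Subtype.val (eqv.apply_symm_apply a)
  have hPpart : IsPartition P := by
    refine ⟨?_, ?_, ?_⟩
    · intro a ha
      obtain ⟨x, _, rfl⟩ := Finset.mem_image.mp ha
      exact ⟨hPxc x, hPxne x⟩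
    · intro a ha b hb hab
      obtain ⟨x, _, rfl⟩ := Finset.mem_image.mp ha
      obtain ⟨y, _, rfl⟩ := Finset.mem_image.mp hb
      exact hPxdis x y (fun h => hab (congrArg Px h))
    · rw [hPdef]
      rw [Finset.coe_image, Set.sUnion_image]
      simpa using hPxcov
  -- out-neighbour splits
  haveI hNout : ∀ x : V, Nonempty {y : V // E x y} := by
    intro x
    obtain ⟨y, hy⟩ := hE x
    exact ⟨⟨y, hy⟩⟩
  have hsplitA : ∀ x : V, ∃ A : {y : V // E x y} → Set (ℕ → Bool),
      (∀ i, IsClopen (A i)) ∧ (∀ i, (A i).Nonempty) ∧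
      (Pairwise fun i j => Disjoint (A i) (A j)) ∧ (⋃ i, A i) = Px x := fun x =>
    split_pieces _ (hPxc x) (hPxne x)
  choose AA hAAc hAAne hAAdis hAAuni using hsplitA
  have hAAsub : ∀ x a, AA x a ⊆ Px x := fun x a =>
    (hAAuni x) ▸ Set.subset_iUnion (AA x) a
  refine ⟨P, hPpart, fun a => φ (ψ a), ψ, ?_, fun a => rfl, ?_, ?_⟩
  · intro a
    rw [← hkey a]
    exact hPxsub (ψ a)
  · -- continuous g
    have cov : ∀ σ : ℕ → Bool, ∃ p : Σ x : V, {y : V // E x y}, σ ∈ AA p.1 p.2 := by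
      intro σ
      obtain ⟨x, hx⟩ := Set.mem_iUnion.mp (hPxcov ▸ Set.mem_univ σ)
      obtain ⟨a, ha⟩ := Set.mem_iUnion.mp ((hAAuni x).symm ▸ hx)
      exact ⟨⟨x, a⟩, ha⟩
    choose pi hpi using cov
    have hpiuniq : ∀ (σ : ℕ → Bool) (x : V) (a : {y : V // E x y}),
        σ ∈ AA x a → pi σ = ⟨x, a⟩ := by
      intro σ x a ha
      have hmem := hpi σ
      rcases hps : pi σ with ⟨x', a'⟩
      rw [hps] at hmem
      have h1 : x' = x := hPxmem_eq σ _ _ (hAAsub _ _ hmem) (hAAsub _ _ ha)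
      subst h1
      have h2 : a' = a := by
        by_contra hne
        exact Set.disjoint_left.mp (hAAdis x' hne) hmem ha
      rw [h2]
    set c : V → (ℕ → Bool) := fun y => (hPxne y).choose with hc
    have hcmem : ∀ y, c y ∈ Px y := fun y => (hPxne y).choose_spec
    set g : (ℕ → Bool) → (ℕ → Bool) := fun σ => c (pi σ).2.val with hg
    have hgcont : Continuous g := by
      apply cont_of_local
      intro σ
      refine ⟨AA (pi σ).1 (pi σ).2, (hAAc _ _).isOpen, hpi σ, ?_⟩
      apply (continuousOn_const (c := c (pi σ).2.val)).congr
      intro σ' hσ'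
      show g σ' = _
      rw [hg]
      simp only []
      rw [hpiuniq σ' (pi σ).1 (pi σ).2 hσ']
    have hedge : ∀ x y : V, gammaEdge g (Px x) (Px y) ↔ E x y := by
      intro x y
      constructor
      · rintro ⟨τ, ⟨σ, hσ, rfl⟩, hτ⟩
        have h1 : (pi σ).1 = x :=
          hPxmem_eq σ _ _ (hAAsub _ _ (hpi σ)) hσ
        have h2 : (pi σ).2.val = y := by
          apply hPxmem_eq (g σ) _ _ _ hτ
          exact hcmem _
        rw [← h1, ← h2]
        exact (pi σ).2.prop
      · intro h
        obtain ⟨σ, hσ⟩ := hAAne x ⟨y, h⟩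
        refine ⟨g σ, ⟨σ, hAAsub _ _ hσ, rfl⟩, ?_⟩
        rw [hg]
        simp only []
        rw [hpiuniq σ x ⟨y, h⟩ hσ]
        exact hcmem y
    exact ⟨g, hgcont, fun a b => by rw [← hkey a, ← hkey b]; exact hedge (ψ a) (ψ b)⟩
  · -- homeomorphism
    intro hEin
    haveI hNin : ∀ y : V, Nonempty {x : V // E x y} := by
      intro y
      obtain ⟨x, hx⟩ := hEin y
      exact ⟨⟨x, hx⟩⟩
    have hsplitC : ∀ y : V, ∃ C : {x : V // E x y} → Set (ℕ → Bool),
        (∀ i, IsClopen (C i)) ∧ (∀ i, (C i).Nonempty) ∧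
        (Pairwise fun i j => Disjoint (C i) (C j)) ∧ (⋃ i, C i) = Px y := fun y =>
      split_pieces _ (hPxc y) (hPxne y)
    choose CC hCCc hCCne hCCdis hCCuni using hsplitC
    have hCCsub : ∀ y a, CC y a ⊆ Px y := fun y a =>
      (hCCuni y) ▸ Set.subset_iUnion (CC y) a
    set ι := Σ x : V, {y : V // E x y} with hι
    set Afam : ι → Set (ℕ → Bool) := fun p => AA p.1 p.2 with hAfam
    set Bfam : ι → Set (ℕ → Bool) := fun p => CC p.2.val ⟨p.1, p.2.prop⟩ with hBfam
    have hAdis : Pairwise fun p q : ι => Disjoint (Afam p) (Afam q) := by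
      rintro ⟨x, a⟩ ⟨x', a'⟩ hne
      by_cases hx : x = x'
      · subst hx
        refine hAAdis x (fun h : a = a' => hne ?_)
        rw [h]
      · exact Set.disjoint_of_subset (hAAsub _ _) (hAAsub _ _) (hPxdis x x' hx)
    have hAcov : (⋃ p, Afam p) = Set.univ := by
      apply Set.eq_univ_of_forall
      intro σ
      obtain ⟨x, hx⟩ := Set.mem_iUnion.mp (hPxcov ▸ Set.mem_univ σ)
      obtain ⟨a, ha⟩ := Set.mem_iUnion.mp ((hAAuni x).symm ▸ hx)
      exact Set.mem_iUnion.mpr ⟨⟨x, a⟩, ha⟩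
    have hBdis : Pairwise fun p q : ι => Disjoint (Bfam p) (Bfam q) := by
      rintro ⟨x, yv, hxy⟩ ⟨x', yv', hxy'⟩ hne
      by_cases hy : yv = yv'
      · subst hy
        refine hCCdis yv (fun h : (⟨x, hxy⟩ : {x : V // E x yv}) = ⟨x', hxy'⟩ => hne ?_)
        have hxx : x = x' := congrArg Subtype.val h
        subst hxx
        rfl
      · exact Set.disjoint_of_subset (hCCsub _ _) (hCCsub _ _) (hPxdis yv yv' hy)
    have hBcov : (⋃ p, Bfam p) = Set.univ := by
      apply Set.eq_univ_of_forall
      intro σ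
      obtain ⟨y, hy⟩ := Set.mem_iUnion.mp (hPxcov ▸ Set.mem_univ σ)
      obtain ⟨a, ha⟩ := Set.mem_iUnion.mp ((hCCuni y).symm ▸ hy)
      exact Set.mem_iUnion.mpr ⟨⟨a.val, ⟨y, a.prop⟩⟩, ha⟩
    obtain ⟨g, hgim⟩ := glue_homeo Afam Bfam (fun p => hAAc _ _) (fun p => hAAne _ _)
      hAdis hAcov (fun p => hCCc _ _) (fun p => hCCne _ _) hBdis hBcov
    have hedge : ∀ x y : V, gammaEdge (⇑g) (Px x) (Px y) ↔ E x y := by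
      intro x y
      constructor
      · rintro ⟨τ, ⟨σ, hσ, rfl⟩, hτ⟩
        obtain ⟨a, ha⟩ := Set.mem_iUnion.mp ((hAAuni x).symm ▸ hσ)
        have h1 : g σ ∈ Bfam ⟨x, a⟩ := hgim ⟨x, a⟩ ▸ Set.mem_image_of_mem g ha
        have h2 : g σ ∈ Px a.val := hCCsub _ _ h1
        have h3 : a.val = y := hPxmem_eq (g σ) _ _ h2 hτ
        rw [← h3]
        exact a.prop
      · intro h
        obtain ⟨σ, hσ⟩ := hAAne x ⟨y, h⟩
        refine ⟨g σ, ⟨σ, hAAsub _ _ hσ, rfl⟩, ?_⟩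
        have h1 : g σ ∈ Bfam ⟨x, ⟨y, h⟩⟩ :=
          hgim ⟨x, ⟨y, h⟩⟩ ▸ Set.mem_image_of_mem g hσ
        exact hCCsub _ _ h1
    exact ⟨g, fun a b => by rw [← hkey a, ← hkey b]; exact hedge (ψ a) (ψ b)⟩
end

section
/- Let f be a continuous self-map of the Cantor space and ε > 0. There exist positive integers K, S and M such that for all k ≥ K, s ≥ S, and all positive integer multiples m of M, there are a continuous self-map g of the Cantor space and a partition P with mesh(P) < ε and uniform distance between f and g less than ε, such that Γ(g,P) consists of exactly k disjoint balloons of type (s,m). -/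
open Set

lemma clopen_of_determined (R : ℕ) (S : Set (ℕ → Bool))
    (h : ∀ σ τ : ℕ → Bool, (∀ n < R, σ n = τ n) → (σ ∈ S → τ ∈ S)) : IsClopen S := by
  have hcyl : ∀ σ : ℕ → Bool, IsOpen (PiNat.cylinder σ R) := fun σ => PiNat.isOpen_cylinder _ _ _
  have key : ∀ (T : Set (ℕ → Bool)), (∀ σ τ : ℕ → Bool, (∀ n < R, σ n = τ n) → (σ ∈ T → τ ∈ T)) →
      IsOpen T := by
    intro T hT
    rw [isOpen_iff_forall_mem_open]
    intro σ hσ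
    refine ⟨PiNat.cylinder σ R, ?_, hcyl σ, PiNat.self_mem_cylinder _ _⟩
    intro τ hτ
    exact hT σ τ (fun n hn => (hτ n hn).symm) hσ
  constructor
  · rw [← isOpen_compl_iff]
    exact key Sᶜ (fun σ τ hag hσ hτ => hσ (h τ σ (fun n hn => (hag n hn).symm) hτ))
  · exact key S h

lemma exists_modulus (f : (ℕ → Bool) → (ℕ → Bool)) (hf : Continuous f) (N : ℕ) :
    ∃ L : ℕ, ∀ σ τ : ℕ → Bool, (∀ n < L, σ n = τ n) → ∀ i < N, f σ i = f τ i := by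
  -- for each σ there is R σ with cylinder σ (R σ) ⊆ {τ | ∀ i < N, f τ i = f σ i}
  have hfib : ∀ σ : ℕ → Bool, IsOpen {τ : ℕ → Bool | ∀ i < N, f τ i = f σ i} := by
    intro σ
    have : {τ : ℕ → Bool | ∀ i < N, f τ i = f σ i} =
        ⋂ i ∈ Finset.range N, {τ : ℕ → Bool | f τ i = f σ i} := by
      ext τ; simp [Finset.mem_range]
    rw [this]
    refine isOpen_biInter_finset (fun i _ => ?_)
    have : {τ : ℕ → Bool | f τ i = f σ i} = (fun τ => f τ i) ⁻¹' {f σ i} := rfl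
    rw [this]
    exact ((continuous_apply i).comp hf).isOpen_preimage _ (isOpen_discrete _)
  have hloc : ∀ σ : ℕ → Bool, ∃ R : ℕ, PiNat.cylinder σ R ⊆ {τ : ℕ → Bool | ∀ i < N, f τ i = f σ i} := by
    intro σ
    obtain ⟨v, ⟨x, n, rfl⟩, hxv, hsub⟩ := (PiNat.isTopologicalBasis_cylinders
      (fun _ : ℕ => Bool)).exists_subset_of_mem_open (by simp : σ ∈ _) (hfib σ)
    refine ⟨n, fun τ hτ => hsub ?_⟩
    intro i hi
    rw [hτ i hi]; exact hxv i hi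
  choose R hR using hloc
  -- compactness
  have hcov : (univ : Set (ℕ → Bool)) ⊆ ⋃ σ : ℕ → Bool, PiNat.cylinder σ (R σ) :=
    fun σ _ => mem_iUnion.2 ⟨σ, PiNat.self_mem_cylinder _ _⟩
  obtain ⟨t, ht⟩ := isCompact_univ.elim_finite_subcover _
    (fun σ => PiNat.isOpen_cylinder _ σ (R σ)) hcov
  refine ⟨t.sup R, fun σ τ hag i hi => ?_⟩
  obtain ⟨x, hxt, hx⟩ : ∃ x ∈ t, σ ∈ PiNat.cylinder x (R x) := by
    have := ht (mem_univ σ); simpa using this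
  have hτx : τ ∈ PiNat.cylinder x (R x) := by
    intro n hn
    rw [← hag n (lt_of_lt_of_le hn (Finset.le_sup hxt))]
    exact hx n hn
  have h1 := hR x hx i hi
  have h2 := hR x hτx i hi
  rw [h1, h2]


lemma eventually_periodic {α : Type*} [Fintype α] [Nonempty α] (Φ : α → α) :
    ∀ x : α, ∀ c m : ℕ, Fintype.card α ≤ c → Nat.factorial (Fintype.card α) ∣ m →
      Φ^[c + m] x = Φ^[c] x := by
  intro x c m hc hm
  set C := Fintype.card α with hC
  have hkey : ∀ a b : ℕ, a < b → b ≤ C → Φ^[b] x = Φ^[a] x → Φ^[c + m] x = Φ^[c] x := by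
    intro a b hab hbC heq
    set p := b - a with hp
    have hppos : 0 < p := by omega
    have hpC : p ≤ C := by omega
    have hper : Function.IsPeriodicPt Φ p (Φ^[a] x) := by
      show Φ^[p] (Φ^[a] x) = Φ^[a] x
      rw [← Function.iterate_add_apply]
      have : p + a = b := by omega
      rw [this, heq]
    have hdvd : p ∣ m := dvd_trans (Nat.dvd_factorial hppos hpC) hm
    have hperm : Function.IsPeriodicPt Φ m (Φ^[a] x) := hper.trans_dvd hdvd
    have hca : a ≤ c := by omega
    calc Φ^[c + m] x = Φ^[c - a] (Φ^[m] (Φ^[a] x)) := by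
          rw [← Function.iterate_add_apply, ← Function.iterate_add_apply]
          congr 1; omega
      _ = Φ^[c - a] (Φ^[a] x) := by rw [hperm]
      _ = Φ^[c] x := by rw [← Function.iterate_add_apply]; congr 1; omega
  have hni : ¬ Function.Injective (fun i : Fin (C+1) => Φ^[(i : ℕ)] x) := by
    intro hinj
    have := Fintype.card_le_of_injective _ hinj
    simp only [Fintype.card_fin] at this
    omega
  simp only [Function.Injective, not_forall] at hni
  obtain ⟨i, j, heq, hne⟩ := hni
  have hij : (i : ℕ) ≠ (j : ℕ) := fun h => hne (Fin.ext h)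
  rcases Nat.lt_or_ge (i : ℕ) (j : ℕ) with h | h
  · exact hkey i j h (by omega) (by rw [heq])
  · exact hkey j i (by omega) (by omega) (by rw [heq])

lemma cantorDist_le (N : ℕ) (σ τ : ℕ → Bool) (h : ∀ n < N, σ n = τ n) :
    cantorDist σ τ ≤ 1 / (N + 1 : ℝ) := by
  rw [cantorDist]
  split_ifs with hex
  · have hfind : N ≤ Nat.find hex := by
      rw [Nat.le_find_iff]
      intro n hn
      simp [h n hn]
    apply one_div_le_one_div_of_le
    · positivity
    · have : (N : ℝ) ≤ Nat.find hex := by exact_mod_cast hfind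
      linarith
  · positivity

lemma cantorDist_nonneg (σ τ : ℕ → Bool) : 0 ≤ cantorDist σ τ := by
  rw [cantorDist]; split_ifs <;> positivity

namespace BalloonAux

def ext0 (N : ℕ) (w : Fin N → Bool) : ℕ → Bool := fun n => if h : n < N then w ⟨n, h⟩ else false

def res (N : ℕ) (σ : ℕ → Bool) : Fin N → Bool := fun i => σ i

def imgF (f : (ℕ → Bool) → (ℕ → Bool)) (N L : ℕ) (u : Fin L → Bool) : Fin N → Bool :=
  res N (f (ext0 L u))

def phiF (f : (ℕ → Bool) → (ℕ → Bool)) (N L : ℕ) (w : Fin N → Bool) : Fin N → Bool :=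
  imgF f N L (res L (ext0 N w))

def Aw (f : (ℕ → Bool) → (ℕ → Bool)) (N L : ℕ) {k : ℕ} (seed : Fin k → Fin L → Bool)
    (j : Fin k) : ℕ → (Fin N → Bool)
  | 0 => res N (ext0 L (seed j))
  | (i+1) => (phiF f N L)^[i] (imgF f N L (seed j))

def Zw (f : (ℕ → Bool) → (ℕ → Bool)) (N L : ℕ) {k : ℕ} (seed : Fin k → Fin L → Bool)
    (j : Fin k) : ℕ → (Fin L → Bool)
  | 0 => seed j
  | (i+1) => res L (ext0 N (Aw f N L seed j (i+1)))

variable (f : (ℕ → Bool) → (ℕ → Bool)) (N L : ℕ) {k : ℕ} (seed : Fin k → Fin L → Bool)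

lemma res_ext0_res_ext0 (hNL : N ≤ L) (w : Fin N → Bool) :
    res N (ext0 L (res L (ext0 N w))) = w := by
  funext i
  simp only [res, ext0]
  rw [dif_pos (lt_of_lt_of_le i.2 hNL), dif_pos i.2]

lemma res_Zw (hNL : N ≤ L) (j : Fin k) (i : ℕ) :
    res N (ext0 L (Zw f N L seed j i)) = Aw f N L seed j i := by
  cases i with
  | zero => rfl
  | succ i => exact res_ext0_res_ext0 N L hNL _

lemma imgF_Zw (j : Fin k) (i : ℕ) :
    imgF f N L (Zw f N L seed j i) = Aw f N L seed j (i + 1) := by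
  cases i with
  | zero => simp [Zw, Aw]
  | succ i =>
    show phiF f N L (Aw f N L seed j (i+1)) = Aw f N L seed j (i+2)
    show phiF f N L ((phiF f N L)^[i] (imgF f N L (seed j))) = (phiF f N L)^[i+1] (imgF f N L (seed j))
    rw [Function.iterate_succ_apply']

def nxt (s m : ℕ) (i : Fin (s + m)) : Fin (s + m) :=
  if h : (i : ℕ) + 1 < s + m then ⟨(i : ℕ) + 1, h⟩
  else if h2 : s < s + m then ⟨s, h2⟩ else i

def iota (k s m : ℕ) (p : Fin k × Fin (s + m)) : ℕ := (p.1 : ℕ) + k * (p.2 : ℕ)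

lemma iota_lt (s m : ℕ) (p : Fin k × Fin (s + m)) : iota k s m p < k * (s + m) := by
  have h1 := p.1.2
  have h2 := p.2.2
  have : (p.1 : ℕ) + k * (p.2 : ℕ) < k * ((p.2 : ℕ) + 1) := by
    rw [Nat.mul_succ]; omega
  calc iota k s m p < k * ((p.2 : ℕ) + 1) := this
    _ ≤ k * (s + m) := Nat.mul_le_mul_left _ (by omega)

lemma imgF_Zw_nxt (hNL : N ≤ L) (s m : ℕ) (hs : 2 ^ N + 1 ≤ s)
    (hm : 0 < m) (hM : Nat.factorial (2 ^ N) ∣ m) (j : Fin k) (i : Fin (s + m)) :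
    imgF f N L (Zw f N L seed j (i : ℕ)) = Aw f N L seed j ((nxt s m i : Fin (s+m)) : ℕ) := by
  rw [imgF_Zw]
  rcases Nat.lt_or_ge ((i : ℕ) + 1) (s + m) with h | h
  · rw [nxt, dif_pos h]
  · have hval : (i : ℕ) + 1 = s + m := by have := i.2; omega
    have hsm : s < s + m := by omega
    rw [nxt, dif_neg (by omega), dif_pos hsm]
    have hAw : ∀ i : ℕ, Aw f N L seed j (i + 1) = (phiF f N L)^[i] (imgF f N L (seed j)) :=
      fun i => rfl
    have hcard : Fintype.card (Fin N → Bool) = 2 ^ N := by simp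
    have hper : (phiF f N L)^[(s - 1) + m] (imgF f N L (seed j)) =
        (phiF f N L)^[s - 1] (imgF f N L (seed j)) := by
      apply eventually_periodic
      · rw [hcard]; omega
      · rw [hcard]; exact hM
    have hs1 : s = (s - 1) + 1 := by omega
    have h2 : Aw f N L seed j s = (phiF f N L)^[s - 1] (imgF f N L (seed j)) := by
      conv_lhs => rw [hs1]
      exact hAw (s - 1)
    show Aw f N L seed j ((i : ℕ) + 1) = Aw f N L seed j s
    rw [hAw, h2, ← hper]
    congr 1
    omega

end BalloonAux

namespace BalloonAux

def dec (k s m : ℕ) (hk : 0 < k) (hsm : 0 < s + m) (d : ℕ) : Fin k × Fin (s + m) :=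
  (⟨d % k, Nat.mod_lt _ hk⟩, ⟨(d / k) % (s + m), Nat.mod_lt _ hsm⟩)

lemma dec_iota {k : ℕ} (s m : ℕ) (hk : 0 < k) (hsm : 0 < s + m) (p : Fin k × Fin (s + m)) :
    dec k s m hk hsm (iota k s m p) = p := by
  have h1 : ((p.1 : ℕ) + k * (p.2 : ℕ)) % k = (p.1 : ℕ) := by
    rw [Nat.add_mul_mod_self_left, Nat.mod_eq_of_lt p.1.2]
  have h2 : ((p.1 : ℕ) + k * (p.2 : ℕ)) / k % (s + m) = (p.2 : ℕ) := by
    rw [Nat.add_mul_div_left _ _ hk, Nat.div_eq_of_lt p.1.2, Nat.zero_add,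
      Nat.mod_eq_of_lt p.2.2]
  exact Prod.ext (Fin.ext h1) (Fin.ext h2)

lemma iota_dec {k : ℕ} (s m : ℕ) (hk : 0 < k) (hsm : 0 < s + m) (d : ℕ) (hd : d < k * (s + m)) :
    iota k s m (dec k s m hk hsm d) = d := by
  have hdiv : d / k < s + m := Nat.div_lt_of_lt_mul hd
  show d % k + k * (d / k % (s + m)) = d
  rw [Nat.mod_eq_of_lt hdiv, Nat.mod_add_div]

variable (f : (ℕ → Bool) → (ℕ → Bool)) (N L : ℕ) {k : ℕ} (seed : Fin k → Fin L → Bool)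

open Classical in
noncomputable def cMap (s m : ℕ) (E : (Fin L → Bool) → Fin k) (hk : 0 < k) (hsm : 0 < s + m)
    (σ : ℕ → Bool) : Fin k × Fin (s + m) :=
  if h : ∃ d, d < k * (s + m) ∧ σ (L + d) = false then
    if res L σ = Zw f N L seed (dec k s m hk hsm (Nat.find h)).1
        ((dec k s m hk hsm (Nat.find h)).2 : ℕ) then dec k s m hk hsm (Nat.find h)
    else (E (res L σ), ⟨0, hsm⟩)
  else (E (res L σ), ⟨0, hsm⟩)

def Good (s m : ℕ) (σ : ℕ → Bool) (p : Fin k × Fin (s + m)) : Prop :=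
  res L σ = Zw f N L seed p.1 (p.2 : ℕ) ∧ (∀ e < iota k s m p, σ (L + e) = true) ∧
    σ (L + iota k s m p) = false

lemma cMap_eq_of_good {s m : ℕ} {E : (Fin L → Bool) → Fin k} {hk : 0 < k} {hsm : 0 < s + m}
    {σ : ℕ → Bool} {p : Fin k × Fin (s + m)} (hg : Good f N L seed s m σ p) :
    cMap f N L seed s m E hk hsm σ = p := by
  have hex : ∃ d, d < k * (s + m) ∧ σ (L + d) = false :=
    ⟨iota k s m p, iota_lt s m p, hg.2.2⟩
  have hfind : Nat.find hex = iota k s m p := by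
    rw [Nat.find_eq_iff]
    refine ⟨⟨iota_lt s m p, hg.2.2⟩, fun e he => ?_⟩
    simp [hg.2.1 e he]
  rw [cMap, dif_pos hex, hfind, dec_iota s m hk hsm p, if_pos hg.1]

lemma cMap_eq_fallback {s m : ℕ} {E : (Fin L → Bool) → Fin k} {hk : 0 < k} {hsm : 0 < s + m}
    {σ : ℕ → Bool} (hg : ∀ p, ¬ Good f N L seed s m σ p) :
    cMap f N L seed s m E hk hsm σ = (E (res L σ), ⟨0, hsm⟩) := by
  rw [cMap]
  split_ifs with h1 h2
  · exfalso
    apply hg (dec k s m hk hsm (Nat.find h1))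
    have hd := (Nat.find_spec h1).1
    have hι : iota k s m (dec k s m hk hsm (Nat.find h1)) = Nat.find h1 :=
      iota_dec s m hk hsm _ hd
    refine ⟨h2, ?_, ?_⟩
    · intro e he
      rw [hι] at he
      have := Nat.find_min h1 he
      have hne : ¬ σ (L + e) = false := fun hh => this ⟨by omega, hh⟩
      revert hne; cases σ (L + e) <;> simp
    · rw [hι]; exact (Nat.find_spec h1).2
  · rfl
  · rfl

lemma cMap_cases (s m : ℕ) (E : (Fin L → Bool) → Fin k) (hk : 0 < k) (hsm : 0 < s + m)
    (σ : ℕ → Bool) :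
    Good f N L seed s m σ (cMap f N L seed s m E hk hsm σ) ∨
      cMap f N L seed s m E hk hsm σ = (E (res L σ), ⟨0, hsm⟩) := by
  by_cases h : ∃ p, Good f N L seed s m σ p
  · obtain ⟨p, hp⟩ := h
    left
    rw [cMap_eq_of_good f N L seed hp]
    exact hp
  · right
    exact cMap_eq_fallback f N L seed (fun p hp => h ⟨p, hp⟩)

noncomputable def ptF (s m : ℕ) (p : Fin k × Fin (s + m)) : ℕ → Bool := fun n =>
  if h : n < L then Zw f N L seed p.1 (p.2 : ℕ) ⟨n, h⟩
  else if n < L + iota k s m p then true else false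

lemma good_ptF (s m : ℕ) (p : Fin k × Fin (s + m)) :
    Good f N L seed s m (ptF f N L seed s m p) p := by
  refine ⟨?_, ?_, ?_⟩
  · funext i
    show ptF f N L seed s m p (i : ℕ) = _
    rw [ptF, dif_pos i.2]
  · intro e he
    show ptF f N L seed s m p (L + e) = true
    rw [ptF, dif_neg (by omega), if_pos (by omega)]
  · show ptF f N L seed s m p (L + iota k s m p) = false
    rw [ptF, dif_neg (by omega), if_neg (by omega)]

lemma cMap_ptF (s m : ℕ) (E : (Fin L → Bool) → Fin k) (hk : 0 < k) (hsm : 0 < s + m)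
    (p : Fin k × Fin (s + m)) :
    cMap f N L seed s m E hk hsm (ptF f N L seed s m p) = p :=
  cMap_eq_of_good f N L seed (good_ptF f N L seed s m p)

lemma cMap_determined (s m : ℕ) (E : (Fin L → Bool) → Fin k) (hk : 0 < k) (hsm : 0 < s + m)
    (σ τ : ℕ → Bool) (hag : ∀ n < L + k * (s + m), σ n = τ n) :
    cMap f N L seed s m E hk hsm σ = cMap f N L seed s m E hk hsm τ := by
  have hres : res L σ = res L τ := funext fun i => hag (i : ℕ) (by have := i.2; omega)
  have hgood : ∀ p, Good f N L seed s m σ p ↔ Good f N L seed s m τ p := by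
    intro p
    have hι := iota_lt s m p
    constructor
    · rintro ⟨h1, h2, h3⟩
      refine ⟨hres ▸ h1, fun e he => ?_, ?_⟩
      · rw [← hag (L + e) (by omega)]; exact h2 e he
      · rw [← hag (L + iota k s m p) (by omega)]; exact h3
    · rintro ⟨h1, h2, h3⟩
      refine ⟨hres ▸ h1, fun e he => ?_, ?_⟩
      · rw [hag (L + e) (by omega)]; exact h2 e he
      · rw [hag (L + iota k s m p) (by omega)]; exact h3
  rcases Classical.em (∃ p, Good f N L seed s m σ p) with ⟨p, hp⟩ | h
  · rw [cMap_eq_of_good f N L seed hp, cMap_eq_of_good f N L seed ((hgood p).1 hp)]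
  · rw [cMap_eq_fallback f N L seed (fun p hp => h ⟨p, hp⟩),
      cMap_eq_fallback f N L seed (fun p hp => h ⟨p, (hgood p).2 hp⟩), hres]

lemma res_res (hNL : N ≤ L) (σ : ℕ → Bool) : res N (ext0 L (res L σ)) = res N σ := by
  funext i
  show ext0 L (res L σ) (i : ℕ) = σ (i : ℕ)
  rw [ext0, dif_pos (lt_of_lt_of_le i.2 hNL)]
  rfl

lemma res_of_cMap (hNL : N ≤ L) (s m : ℕ) (E : (Fin L → Bool) → Fin k)
    (hSE : ∀ u, seed (E u) = u) (hk : 0 < k) (hsm : 0 < s + m) (σ : ℕ → Bool) :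
    res N σ = Aw f N L seed (cMap f N L seed s m E hk hsm σ).1
      ((cMap f N L seed s m E hk hsm σ).2 : ℕ) := by
  rcases cMap_cases f N L seed s m E hk hsm σ with hg | hfb
  · rw [← res_Zw f N L seed hNL, ← hg.1, res_res N L hNL]
  · rw [hfb]
    show res N σ = Aw f N L seed (E (res L σ)) 0
    show res N σ = res N (ext0 L (seed (E (res L σ))))
    rw [hSE, res_res N L hNL]

lemma img_of_cMap (hNL : N ≤ L) (s m : ℕ) (E : (Fin L → Bool) → Fin k)
    (hSE : ∀ u, seed (E u) = u) (hk : 0 < k) (hsm : 0 < s + m)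
    (hmod : ∀ σ τ : ℕ → Bool, (∀ n < L, σ n = τ n) → ∀ i < N, f σ i = f τ i)
    (hs : 2 ^ N + 1 ≤ s) (hm : 0 < m) (hM : Nat.factorial (2 ^ N) ∣ m) (σ : ℕ → Bool) :
    res N (f σ) = Aw f N L seed (cMap f N L seed s m E hk hsm σ).1
      ((nxt s m (cMap f N L seed s m E hk hsm σ).2 : Fin (s + m)) : ℕ) := by
  have himg : res N (f σ) = imgF f N L (res L σ) := by
    funext i
    apply hmod σ (ext0 L (res L σ)) _ (i : ℕ) i.2
    intro n hn
    rw [ext0, dif_pos hn]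
    rfl
  rcases cMap_cases f N L seed s m E hk hsm σ with hg | hfb
  · rw [himg, hg.1]
    exact imgF_Zw_nxt f N L seed hNL s m hs hm hM _ _
  · rw [hfb]
    have h1 : ((nxt s m (⟨0, hsm⟩ : Fin (s + m)) : Fin (s + m)) : ℕ) = 1 := by
      have h2 := Nat.one_le_two_pow (n := N)
      rw [nxt, dif_pos (by simp only []; show (0:ℕ) + 1 < s + m; omega)]
    show res N (f σ) = Aw f N L seed (E (res L σ)) _
    rw [h1, himg]
    show imgF f N L (res L σ) = imgF f N L (seed (E (res L σ)))
    rw [hSE]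

end BalloonAux

namespace BalloonAux

variable (f : (ℕ → Bool) → (ℕ → Bool)) (N L : ℕ) {k : ℕ} (seed : Fin k → Fin L → Bool)
  (s m : ℕ) (E : (Fin L → Bool) → Fin k) (hk : 0 < k) (hsm : 0 < s + m)

def cellSet (p : Fin k × Fin (s + m)) : Set (ℕ → Bool) :=
  cMap f N L seed s m E hk hsm ⁻¹' {p}

noncomputable def gMap (σ : ℕ → Bool) : ℕ → Bool :=
  ptF f N L seed s m ((cMap f N L seed s m E hk hsm σ).1,
    nxt s m (cMap f N L seed s m E hk hsm σ).2)

lemma ptF_mem_cellSet (p : Fin k × Fin (s + m)) :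
    ptF f N L seed s m p ∈ cellSet f N L seed s m E hk hsm p :=
  cMap_ptF f N L seed s m E hk hsm p

lemma cellSet_clopen (p : Fin k × Fin (s + m)) :
    IsClopen (cellSet f N L seed s m E hk hsm p) := by
  apply clopen_of_determined (L + k * (s + m))
  intro σ τ hag hσ
  show cMap f N L seed s m E hk hsm τ = p
  rw [← cMap_determined f N L seed s m E hk hsm σ τ hag]
  exact hσ

lemma cellSet_disjoint {p q : Fin k × Fin (s + m)} (hpq : p ≠ q) :
    Disjoint (cellSet f N L seed s m E hk hsm p) (cellSet f N L seed s m E hk hsm q) := by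
  rw [Set.disjoint_left]
  rintro σ hp hq
  exact hpq ((Set.mem_preimage.1 hp).symm.trans (Set.mem_preimage.1 hq))

lemma cellSet_inj : Function.Injective (cellSet f N L seed s m E hk hsm) := by
  intro p q hpq
  have h1 := ptF_mem_cellSet f N L seed s m E hk hsm p
  rw [hpq] at h1
  exact ((cMap_ptF f N L seed s m E hk hsm p).symm.trans h1)

lemma gMap_continuous : Continuous (gMap f N L seed s m E hk hsm) := by
  rw [continuous_def]
  intro U _
  apply (clopen_of_determined (L + k * (s + m)) _ ?_).isOpen
  intro σ τ hag hσ
  show gMap f N L seed s m E hk hsm τ ∈ U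
  have : gMap f N L seed s m E hk hsm τ = gMap f N L seed s m E hk hsm σ := by
    rw [gMap, gMap, cMap_determined f N L seed s m E hk hsm σ τ hag]
  rwa [this]

lemma gMap_mem (σ : ℕ → Bool) :
    gMap f N L seed s m E hk hsm σ ∈ cellSet f N L seed s m E hk hsm
      ((cMap f N L seed s m E hk hsm σ).1, nxt s m (cMap f N L seed s m E hk hsm σ).2) :=
  cMap_ptF f N L seed s m E hk hsm _

lemma res_ptF (hNL : N ≤ L) (p : Fin k × Fin (s + m)) :
    res N (ptF f N L seed s m p) = Aw f N L seed p.1 (p.2 : ℕ) := by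
  have hg := good_ptF f N L seed s m p
  rw [← res_res N L hNL, hg.1, res_Zw f N L seed hNL]

lemma res_gMap (hNL : N ≤ L) (σ : ℕ → Bool) :
    res N (gMap f N L seed s m E hk hsm σ) =
      Aw f N L seed (cMap f N L seed s m E hk hsm σ).1
        ((nxt s m (cMap f N L seed s m E hk hsm σ).2 : Fin (s + m)) : ℕ) :=
  res_ptF f N L seed s m hNL _

lemma gamma_iff (p q : Fin k × Fin (s + m)) :
    gammaEdge (gMap f N L seed s m E hk hsm) (cellSet f N L seed s m E hk hsm p)
      (cellSet f N L seed s m E hk hsm q) ↔ q = (p.1, nxt s m p.2) := by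
  constructor
  · rintro ⟨x, ⟨σ, hσ, rfl⟩, hq⟩
    have hcσ : cMap f N L seed s m E hk hsm σ = p := hσ
    have h1 : cMap f N L seed s m E hk hsm (gMap f N L seed s m E hk hsm σ) =
        ((cMap f N L seed s m E hk hsm σ).1, nxt s m (cMap f N L seed s m E hk hsm σ).2) :=
      gMap_mem f N L seed s m E hk hsm σ
    have h2 : cMap f N L seed s m E hk hsm (gMap f N L seed s m E hk hsm σ) = q := hq
    rw [← h2, h1, hcσ]
  · rintro rfl
    refine ⟨gMap f N L seed s m E hk hsm (ptF f N L seed s m p),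
      ⟨ptF f N L seed s m p, ptF_mem_cellSet f N L seed s m E hk hsm p, rfl⟩, ?_⟩
    have h1 := gMap_mem f N L seed s m E hk hsm (ptF f N L seed s m p)
    rwa [cMap_ptF f N L seed s m E hk hsm p] at h1

lemma balloon_iff (hs : 1 ≤ s) (hm : 1 ≤ m) (i i' : Fin (s + m)) :
    balloonEdge s m i i' ↔ i' = nxt s m i := by
  have h2 := i.2
  have h3 := i'.2
  by_cases h : (i : ℕ) + 1 < s + m
  · rw [nxt, dif_pos h]
    simp only [balloonEdge, Fin.ext_iff]
    omega
  · rw [nxt, dif_neg h, dif_pos (by omega)]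
    simp only [balloonEdge, Fin.ext_iff]
    omega

end BalloonAux

lemma cantorDiam_le_of_res (N : ℕ) (A : Set (ℕ → Bool)) (w : Fin N → Bool)
    (h : ∀ σ ∈ A, BalloonAux.res N σ = w) : cantorDiam A ≤ 1 / (N + 1 : ℝ) := by
  apply Real.sSup_le
  · rintro r ⟨σ, hσ, τ, hτ, rfl⟩
    apply cantorDist_le
    intro n hn
    have h1 := congrFun (h σ hσ) ⟨n, hn⟩
    have h2 := congrFun (h τ hτ) ⟨n, hn⟩
    exact h1.trans h2.symm
  · positivity

open BalloonAux

theorem approx_by_balloon_map (f : (ℕ → Bool) → (ℕ → Bool)) (hf : Continuous f)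
    (ε : ℝ) (hε : 0 < ε) :
    ∃ K S M : ℕ, 0 < K ∧ 0 < S ∧ 0 < M ∧
      ∀ k s m : ℕ, ∀ _hk : K ≤ k, ∀ _hs : S ≤ s, ∀ hm : 0 < m, ∀ _hM : M ∣ m,
        ∃ (g : (ℕ → Bool) → (ℕ → Bool)) (P : Finset (Set (ℕ → Bool))),
          Continuous g ∧ IsPartition P ∧ mesh (↑P : Set (Set (ℕ → Bool))) < ε ∧
          (∀ σ, cantorDist (f σ) (g σ) < ε) ∧
          ∃ e : {a // a ∈ P} ≃ Fin k × Fin (s + m),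
            ∀ a b : {a // a ∈ P}, gammaEdge g a.val b.val ↔
              ((e a).1 = (e b).1 ∧ balloonEdge s m (e a).2 (e b).2) := by
  classical
  obtain ⟨N, hN⟩ := exists_nat_gt (1 / ε)
  have hNε : 1 / ((N : ℝ) + 1) < ε := by
    have h1 : 1 < ((N : ℝ) + 1) * ε := (div_lt_iff₀ hε).1 (by linarith)
    rw [div_lt_iff₀ (by positivity)]
    linarith [mul_comm ((N : ℝ) + 1) ε]
  obtain ⟨L0, hL0⟩ := exists_modulus f hf N
  set L := max L0 N with hLdef
  have hNL : N ≤ L := le_max_right _ _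
  have hmod : ∀ σ τ : ℕ → Bool, (∀ n < L, σ n = τ n) → ∀ i < N, f σ i = f τ i :=
    fun σ τ h => hL0 σ τ (fun n hn => h n (lt_of_lt_of_le hn (le_max_left _ _)))
  have h2N : 0 < 2 ^ N := Nat.pow_pos (by norm_num)
  refine ⟨2 ^ L, 2 ^ N + 1, Nat.factorial (2 ^ N),
    Nat.pow_pos (by norm_num), by omega, Nat.factorial_pos _, ?_⟩
  intro k s m hk hs hm hM
  have hk0 : 0 < k := lt_of_lt_of_le (Nat.pow_pos (by norm_num)) hk
  have hsm0 : 0 < s + m := by omega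
  have hs1 : 1 ≤ s := by omega
  have hcard : Fintype.card (Fin L → Bool) ≤ Fintype.card (Fin k) := by
    simp only [Fintype.card_fun, Fintype.card_fin, Fintype.card_bool]
    exact hk
  obtain ⟨E⟩ := Function.Embedding.nonempty_of_card_le hcard
  set seed : Fin k → Fin L → Bool := Function.invFun ⇑E with hseeddef
  have hSE : ∀ u, seed (E u) = u := fun u => Function.leftInverse_invFun E.injective u
  refine ⟨gMap f N L seed s m ⇑E hk0 hsm0,
    Finset.image (fun p => cellSet f N L seed s m ⇑E hk0 hsm0 p) Finset.univ,
    gMap_continuous f N L seed s m ⇑E hk0 hsm0, ?_, ?_, ?_, ?_⟩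
  · -- IsPartition
    refine ⟨?_, ?_, ?_⟩
    · intro a ha
      obtain ⟨p, -, rfl⟩ := Finset.mem_image.1 ha
      exact ⟨cellSet_clopen f N L seed s m ⇑E hk0 hsm0 p,
        ⟨ptF f N L seed s m p, ptF_mem_cellSet f N L seed s m ⇑E hk0 hsm0 p⟩⟩
    · intro a ha b hb hab
      obtain ⟨p, -, rfl⟩ := Finset.mem_image.1 ha
      obtain ⟨q, -, rfl⟩ := Finset.mem_image.1 hb
      exact cellSet_disjoint f N L seed s m ⇑E hk0 hsm0 (fun h => hab (by rw [h]))
    · apply Set.eq_univ_of_forall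
      intro σ
      refine ⟨cellSet f N L seed s m ⇑E hk0 hsm0 (cMap f N L seed s m ⇑E hk0 hsm0 σ), ?_, rfl⟩
      exact Finset.mem_coe.2 (Finset.mem_image_of_mem _ (Finset.mem_univ _))
  · -- mesh
    apply lt_of_le_of_lt _ hNε
    apply Real.sSup_le
    · rintro r ⟨a, ha, rfl⟩
      obtain ⟨p, -, rfl⟩ := Finset.mem_image.1 (Finset.mem_coe.1 ha)
      apply cantorDiam_le_of_res N _ (Aw f N L seed p.1 (p.2 : ℕ))
      intro σ hσ
      have hcp : cMap f N L seed s m ⇑E hk0 hsm0 σ = p := hσ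
      rw [res_of_cMap f N L seed hNL s m ⇑E hSE hk0 hsm0 σ, hcp]
    · positivity
  · -- dist
    intro σ
    apply lt_of_le_of_lt _ hNε
    apply cantorDist_le
    intro n hn
    have h1 := img_of_cMap f N L seed hNL s m ⇑E hSE hk0 hsm0 hmod hs hm hM σ
    have h2 := res_gMap f N L seed s m ⇑E hk0 hsm0 hNL σ
    exact congrFun (h1.trans h2.symm) ⟨n, hn⟩
  · -- equivalence
    have hb : Function.Bijective (fun p : Fin k × Fin (s + m) =>
        (⟨cellSet f N L seed s m ⇑E hk0 hsm0 p,
          Finset.mem_image_of_mem _ (Finset.mem_univ p)⟩ :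
          {a // a ∈ Finset.image (fun p => cellSet f N L seed s m ⇑E hk0 hsm0 p) Finset.univ})) := by
      constructor
      · intro p q h
        exact cellSet_inj f N L seed s m ⇑E hk0 hsm0 (congrArg Subtype.val h)
      · rintro ⟨a, ha⟩
        obtain ⟨p, -, hp⟩ := Finset.mem_image.1 ha
        exact ⟨p, Subtype.ext hp⟩
    refine ⟨(Equiv.ofBijective _ hb).symm, ?_⟩
    intro a b
    set e := (Equiv.ofBijective _ hb).symm with hedef
    have ha : a.val = cellSet f N L seed s m ⇑E hk0 hsm0 (e a) :=
      (congrArg Subtype.val (Equiv.apply_symm_apply (Equiv.ofBijective _ hb) a)).symm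
    have hbv : b.val = cellSet f N L seed s m ⇑E hk0 hsm0 (e b) :=
      (congrArg Subtype.val (Equiv.apply_symm_apply (Equiv.ofBijective _ hb) b)).symm
    rw [ha, hbv, gamma_iff f N L seed s m ⇑E hk0 hsm0]
    constructor
    · intro h
      refine ⟨(congrArg Prod.fst h).symm, ?_⟩
      exact (balloon_iff s m hs1 hm _ _).2 (congrArg Prod.snd h)
    · rintro ⟨h1, h2⟩
      exact Prod.ext h1.symm ((balloon_iff s m hs1 hm _ _).1 h2)
end

section
/- Let f and g be continuous self-maps of the Cantor space. Suppose there are decreasing null sequences of partitions (P_n) and (Q_n) of the Cantor space and digraph isomorphisms ν_n : Γ(f,P_n) → Γ(g,Q_n) such that both (ν_n) and (ν_n⁻¹) asymptotically commute with refinements. Then f and g are topologically conjugate. -/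
lemma cantorDist_le_one (σ τ : ℕ → Bool) : cantorDist σ τ ≤ 1 := by
  rw [cantorDist]
  split_ifs with h
  · rw [div_le_one (by positivity)]
    have : (0:ℝ) ≤ (Nat.find h : ℝ) := Nat.cast_nonneg _
    linarith
  · norm_num

lemma eq_of_cantorDist_le {σ τ : ℕ → Bool} {k : ℕ}
    (h : cantorDist σ τ ≤ 1 / ((k : ℝ) + 1)) {i : ℕ} (hik : i < k) : σ i = τ i := by
  by_contra hne
  have hex : ∃ n, σ n ≠ τ n := ⟨i, hne⟩
  rw [cantorDist, dif_pos hex] at h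
  have h2 : ((k : ℝ) + 1) ≤ (Nat.find hex : ℝ) + 1 :=
    le_of_one_div_le_one_div (by positivity) h
  have h3 : k ≤ Nat.find hex := by exact_mod_cast (by linarith : (k:ℝ) ≤ (Nat.find hex : ℝ))
  have h4 : Nat.find hex ≤ i := Nat.find_min' hex hne
  omega

lemma cantorDist_le_cantorDiam {A : Set (ℕ → Bool)} {σ τ : ℕ → Bool}
    (hσ : σ ∈ A) (hτ : τ ∈ A) : cantorDist σ τ ≤ cantorDiam A := by
  apply le_csSup
  · refine ⟨1, ?_⟩
    rintro r ⟨σ', _, τ', _, rfl⟩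
    exact cantorDist_le_one σ' τ'
  · exact ⟨σ, hσ, τ, hτ, rfl⟩

lemma cantorDiam_le_one (A : Set (ℕ → Bool)) : cantorDiam A ≤ 1 := by
  apply Real.sSup_le _ zero_le_one
  rintro r ⟨σ', _, τ', _, rfl⟩
  exact cantorDist_le_one σ' τ'

lemma cantorDiam_le_mesh {C : Set (Set (ℕ → Bool))} {A : Set (ℕ → Bool)}
    (hA : A ∈ C) : cantorDiam A ≤ mesh C := by
  apply le_csSup
  · refine ⟨1, ?_⟩
    rintro r ⟨B, _, rfl⟩
    exact cantorDiam_le_one B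
  · exact Set.mem_image_of_mem _ hA

lemma mesh_agree {C : ℕ → Set (Set (ℕ → Bool))}
    (hC : Filter.Tendsto (fun n => mesh (C n)) Filter.atTop (nhds 0)) (k : ℕ) :
    ∃ N, ∀ n, N ≤ n → ∀ A ∈ C n, ∀ σ ∈ A, ∀ τ ∈ A, ∀ i < k, σ i = τ i := by
  obtain ⟨N, hN⟩ := Metric.tendsto_atTop.mp hC (1 / ((k:ℝ) + 1)) (by positivity)
  refine ⟨N, fun n hn A hA σ hσ τ hτ i hik => ?_⟩
  have h1 := hN n hn
  rw [Real.dist_eq, sub_zero] at h1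
  have h2 : cantorDist σ τ ≤ 1 / ((k:ℝ) + 1) :=
    le_trans (le_trans (cantorDist_le_cantorDiam hσ hτ) (cantorDiam_le_mesh hA))
      (le_of_lt (lt_of_le_of_lt (le_abs_self _) h1))
  exact eq_of_cantorDist_le h2 hik

lemma exists_cylinder {U : Set (ℕ → Bool)} (hU : IsOpen U) {τ : ℕ → Bool} (hτ : τ ∈ U) :
    ∃ k, ∀ ρ : ℕ → Bool, (∀ i < k, ρ i = τ i) → ρ ∈ U := by
  obtain ⟨I, u, hu, hsub⟩ := isOpen_pi_iff.mp hU τ hτ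
  refine ⟨(I.sup id) + 1, fun ρ hρ => hsub fun i hi => ?_⟩
  have hi' : i ∈ I := hi
  have : ρ i = τ i := hρ i (Nat.lt_succ_of_le (Finset.le_sup (f := id) hi'))
  rw [this]
  exact (hu i hi').2

lemma partition_unique {P : Finset (Set (ℕ → Bool))} (hP : IsPartition P)
    {a b : Set (ℕ → Bool)} {σ : ℕ → Bool} (ha : a ∈ P) (hb : b ∈ P)
    (hσa : σ ∈ a) (hσb : σ ∈ b) : a = b := by
  by_contra hne
  exact Set.disjoint_left.mp (hP.2.1 a ha b hb hne) hσa hσb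

noncomputable def cellAt (P : ℕ → Finset (Set (ℕ → Bool))) (hP : ∀ n, IsPartition (P n))
    (n : ℕ) (σ : ℕ → Bool) : Set (ℕ → Bool) :=
  (Set.mem_sUnion.mp (((hP n).2.2) ▸ Set.mem_univ σ :
    σ ∈ ⋃₀ (↑(P n) : Set (Set (ℕ → Bool))))).choose

lemma cellAt_mem (P : ℕ → Finset (Set (ℕ → Bool))) (hP : ∀ n, IsPartition (P n))
    (n : ℕ) (σ : ℕ → Bool) : cellAt P hP n σ ∈ P n :=
  (Set.mem_sUnion.mp (((hP n).2.2) ▸ Set.mem_univ σ :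
    σ ∈ ⋃₀ (↑(P n) : Set (Set (ℕ → Bool))))).choose_spec.1

lemma mem_cellAt (P : ℕ → Finset (Set (ℕ → Bool))) (hP : ∀ n, IsPartition (P n))
    (n : ℕ) (σ : ℕ → Bool) : σ ∈ cellAt P hP n σ :=
  (Set.mem_sUnion.mp (((hP n).2.2) ▸ Set.mem_univ σ :
    σ ∈ ⋃₀ (↑(P n) : Set (Set (ℕ → Bool))))).choose_spec.2

lemma exists_superset (P : ℕ → Finset (Set (ℕ → Bool)))
    (hPdec : ∀ n, ∀ b ∈ P (n + 1), ∃ a ∈ P n, b ⊆ a) :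
    ∀ n m, n ≤ m → ∀ b ∈ P m, ∃ a ∈ P n, b ⊆ a := by
  intro n m hnm
  induction m, hnm using Nat.le_induction with
  | base => exact fun b hb => ⟨b, hb, subset_rfl⟩
  | succ m hm ih =>
    intro b hb
    obtain ⟨a, ha, hba⟩ := hPdec m b hb
    obtain ⟨a', ha', haa'⟩ := ih a ha
    exact ⟨a', ha', hba.trans haa'⟩

lemma cellAt_mono (P : ℕ → Finset (Set (ℕ → Bool))) (hP : ∀ n, IsPartition (P n))
    (hPdec : ∀ n, ∀ b ∈ P (n + 1), ∃ a ∈ P n, b ⊆ a)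
    {n m : ℕ} (hnm : n ≤ m) (σ : ℕ → Bool) : cellAt P hP m σ ⊆ cellAt P hP n σ := by
  obtain ⟨a, ha, hsub⟩ := exists_superset P hPdec n m hnm _ (cellAt_mem P hP m σ)
  have : a = cellAt P hP n σ :=
    partition_unique (hP n) ha (cellAt_mem P hP n σ) (hsub (mem_cellAt P hP m σ))
      (mem_cellAt P hP n σ)
  exact this ▸ hsub

def tset (P : ℕ → Finset (Set (ℕ → Bool))) (ν : ℕ → Set (ℕ → Bool) → Set (ℕ → Bool))
    (n : ℕ) (a : Set (ℕ → Bool)) : Set (ℕ → Bool) :=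
  ⋃ m, ⋃ _ : n ≤ m, ⋃ b ∈ {b | b ∈ P m ∧ b ⊆ a}, ν m b

lemma subset_tset {P : ℕ → Finset (Set (ℕ → Bool))} {ν : ℕ → Set (ℕ → Bool) → Set (ℕ → Bool)}
    {m n : ℕ} (hnm : n ≤ m) {b a : Set (ℕ → Bool)} (hb : b ∈ P m) (hba : b ⊆ a) :
    ν m b ⊆ tset P ν n a := by
  intro x hx
  exact Set.mem_iUnion.mpr ⟨m, Set.mem_iUnion.mpr ⟨hnm, Set.mem_iUnion₂.mpr ⟨b, ⟨hb, hba⟩, hx⟩⟩⟩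
lemma key (P Q : ℕ → Finset (Set (ℕ → Bool)))
    (hP : ∀ n, IsPartition (P n)) (hQ : ∀ n, IsPartition (Q n))
    (hPdec : ∀ n, ∀ b ∈ P (n + 1), ∃ a ∈ P n, b ⊆ a)
    (ν : ℕ → Set (ℕ → Bool) → Set (ℕ → Bool))
    (hνmem : ∀ n, ∀ a ∈ P n, ν n a ∈ Q n)
    (hνasym : Filter.Tendsto (fun n => mesh ((fun a => tset P ν n a) ''
      (↑(P n) : Set (Set (ℕ → Bool))))) Filter.atTop (nhds 0)) :
    ∃ h : (ℕ → Bool) → (ℕ → Bool), Continuous h ∧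
      ∀ k, ∃ N, ∀ n, N ≤ n → ∀ σ, ∀ y ∈ tset P ν n (cellAt P hP n σ),
        ∀ i < k, h σ i = y i := by
  choose N hN using fun k => mesh_agree hνasym k
  have hne : ∀ (n : ℕ) (a : Set (ℕ → Bool)), ∃ y, a ∈ P n → y ∈ ν n a := by
    intro n a
    by_cases ha : a ∈ P n
    · obtain ⟨y, hy⟩ := ((hQ n).1 _ (hνmem n a ha)).2
      exact ⟨y, fun _ => hy⟩
    · exact ⟨fun _ => true, fun h => absurd h ha⟩
  choose pt hpt using hne
  set h : (ℕ → Bool) → (ℕ → Bool) :=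
    fun σ i => pt (N (i + 1)) (cellAt P hP (N (i + 1)) σ) i with hh
  have hmemT : ∀ n σ, tset P ν n (cellAt P hP n σ) ∈
      (fun a => tset P ν n a) '' (↑(P n) : Set (Set (ℕ → Bool))) :=
    fun n σ => ⟨cellAt P hP n σ, Finset.mem_coe.mpr (cellAt_mem P hP n σ), rfl⟩
  have main : ∀ k, ∀ n, N k ≤ n → ∀ σ, ∀ y ∈ tset P ν n (cellAt P hP n σ),
      ∀ i < k, h σ i = y i := by
    intro k n hn σ y hy i hik
    set j := N (i + 1) with hj
    set m := max n j with hm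
    have hmj : j ≤ m := le_max_right n j
    have hmn : n ≤ m := le_max_left n j
    have hcm := cellAt_mem P hP m σ
    have hzj : pt m (cellAt P hP m σ) ∈ tset P ν j (cellAt P hP j σ) :=
      subset_tset hmj hcm (cellAt_mono P hP hPdec hmj σ) (hpt m _ hcm)
    have hxj : pt j (cellAt P hP j σ) ∈ tset P ν j (cellAt P hP j σ) :=
      subset_tset le_rfl (cellAt_mem P hP j σ) subset_rfl (hpt j _ (cellAt_mem P hP j σ))
    have h1 : h σ i = pt m (cellAt P hP m σ) i :=
      hN (i + 1) j le_rfl _ (hmemT j σ) _ hxj _ hzj i (Nat.lt_succ_self i)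
    have hzn : pt m (cellAt P hP m σ) ∈ tset P ν n (cellAt P hP n σ) :=
      subset_tset hmn hcm (cellAt_mono P hP hPdec hmn σ) (hpt m _ hcm)
    have h2 : pt m (cellAt P hP m σ) i = y i :=
      hN k n hn _ (hmemT n σ) _ hzn _ hy i hik
    rw [h1, h2]
  refine ⟨h, ?_, fun k => ⟨N k, main k⟩⟩
  apply continuous_pi
  intro i
  apply IsLocallyConstant.continuous
  rw [IsLocallyConstant.iff_exists_open]
  intro σ
  refine ⟨cellAt P hP (N (i + 1)) σ,
    ((hP _).1 _ (cellAt_mem P hP (N (i + 1)) σ)).1.2,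
    mem_cellAt P hP (N (i + 1)) σ, fun τ hτ => ?_⟩
  have hcell : cellAt P hP (N (i + 1)) τ = cellAt P hP (N (i + 1)) σ :=
    partition_unique (hP _) (cellAt_mem P hP _ τ) (cellAt_mem P hP _ σ)
      (mem_cellAt P hP _ τ) hτ
  show pt (N (i + 1)) (cellAt P hP (N (i + 1)) τ) i
      = pt (N (i + 1)) (cellAt P hP (N (i + 1)) σ) i
  rw [hcell]


lemma key_leftInv (P Q : ℕ → Finset (Set (ℕ → Bool)))
    (hP : ∀ n, IsPartition (P n)) (hQ : ∀ n, IsPartition (Q n))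
    (hPdec : ∀ n, ∀ b ∈ P (n + 1), ∃ a ∈ P n, b ⊆ a)
    (hQdec : ∀ n, ∀ b ∈ Q (n + 1), ∃ a ∈ Q n, b ⊆ a)
    (ν μ : ℕ → Set (ℕ → Bool) → Set (ℕ → Bool))
    (hνmem : ∀ n, ∀ a ∈ P n, ν n a ∈ Q n)
    (hνμ : ∀ n, ∀ a ∈ P n, μ n (ν n a) = a)
    (h h' : (ℕ → Bool) → (ℕ → Bool))
    (Hh : ∀ k, ∃ N, ∀ n, N ≤ n → ∀ σ, ∀ y ∈ tset P ν n (cellAt P hP n σ),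
      ∀ i < k, h σ i = y i)
    (Hh' : ∀ k, ∃ N, ∀ n, N ≤ n → ∀ τ, ∀ y ∈ tset Q μ n (cellAt Q hQ n τ),
      ∀ i < k, h' τ i = y i) :
    ∀ σ, h' (h σ) = σ := by
  intro σ
  funext i
  obtain ⟨n, hN₂⟩ := Hh' (i + 1)
  set τ := h σ with hτ
  set c := cellAt Q hQ n τ with hc
  have hcopen : IsOpen c := ((hQ n).1 _ (cellAt_mem Q hQ n τ)).1.2
  obtain ⟨kc, hkc⟩ := exists_cylinder hcopen (mem_cellAt Q hQ n τ)
  obtain ⟨N₁, hN₁⟩ := Hh kc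
  set m := max n N₁ with hm
  have hbm : cellAt P hP m σ ∈ P m := cellAt_mem P hP m σ
  obtain ⟨y, hy⟩ := ((hQ m).1 _ (hνmem m _ hbm)).2
  have hyT : y ∈ tset P ν N₁ (cellAt P hP N₁ σ) :=
    subset_tset (le_max_right n N₁) hbm (cellAt_mono P hP hPdec (le_max_right n N₁) σ) hy
  have hyc : y ∈ c := hkc y fun i' hi' => (hN₁ N₁ le_rfl σ y hyT i' hi').symm
  have hdQ : ν m (cellAt P hP m σ) ∈ Q m := hνmem m _ hbm
  obtain ⟨c', hc', hdc'⟩ := exists_superset Q hQdec n m (le_max_left n N₁) _ hdQ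
  have hcc : c' = c := partition_unique (hQ n) hc' (cellAt_mem Q hQ n τ) (hdc' hy) hyc
  have hdc : ν m (cellAt P hP m σ) ⊆ c := hcc ▸ hdc'
  have hσT : σ ∈ tset Q μ n c := by
    have hsub : μ m (ν m (cellAt P hP m σ)) ⊆ tset Q μ n c :=
      subset_tset (le_max_left n N₁) hdQ hdc
    rw [hνμ m _ hbm] at hsub
    exact hsub (mem_cellAt P hP m σ)
  exact hN₂ n le_rfl τ σ hσT i (Nat.lt_succ_self i)

lemma key_conj (f g : (ℕ → Bool) → (ℕ → Bool)) (hg : Continuous g)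
    (P Q : ℕ → Finset (Set (ℕ → Bool)))
    (hP : ∀ n, IsPartition (P n))
    (ν : ℕ → Set (ℕ → Bool) → Set (ℕ → Bool))
    (hiso : ∀ n, ∀ a ∈ P n, ∀ b ∈ P n,
      (gammaEdge f a b ↔ gammaEdge g (ν n a) (ν n b)))
    (h : (ℕ → Bool) → (ℕ → Bool))
    (Hh : ∀ k, ∃ N, ∀ n, N ≤ n → ∀ σ, ∀ y ∈ tset P ν n (cellAt P hP n σ),
      ∀ i < k, h σ i = y i) :
    ∀ σ, h (f σ) = g (h σ) := by
  intro σ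
  funext i
  have hUopen : IsOpen ((fun ρ => g ρ i) ⁻¹' {g (h σ) i}) :=
    (((continuous_apply i).comp hg)).isOpen_preimage _ (isOpen_discrete _)
  have hmemU : h σ ∈ (fun ρ => g ρ i) ⁻¹' {g (h σ) i} := rfl
  obtain ⟨k', hk'⟩ := exists_cylinder hUopen hmemU
  obtain ⟨N, hN⟩ := Hh (i + 1)
  obtain ⟨N', hN'⟩ := Hh k'
  set n := max N N' with hn
  set a := cellAt P hP n σ with ha
  set b := cellAt P hP n (f σ) with hb
  have hedge : gammaEdge f a b :=
    ⟨f σ, ⟨σ, mem_cellAt P hP n σ, rfl⟩, mem_cellAt P hP n (f σ)⟩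
  obtain ⟨z, ⟨y, hyA, rfl⟩, hzB⟩ :=
    (hiso n a (cellAt_mem P hP n σ) b (cellAt_mem P hP n (f σ))).mp hedge
  have hyT : y ∈ tset P ν n a := subset_tset le_rfl (cellAt_mem P hP n σ) subset_rfl hyA
  have hgy : g y i = g (h σ) i :=
    hk' y fun i' hi' => (hN' n (le_max_right N N') σ y hyT i' hi').symm
  have hzT : g y ∈ tset P ν n b :=
    subset_tset le_rfl (cellAt_mem P hP n (f σ)) subset_rfl hzB
  have h1 : h (f σ) i = g y i := hN n (le_max_left N N') (f σ) (g y) hzT i (Nat.lt_succ_self i)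
  rw [h1, hgy]

theorem conjugate_of_asymptotically_commuting
    (f g : (ℕ → Bool) → (ℕ → Bool)) (hf : Continuous f) (hg : Continuous g)
    (P Q : ℕ → Finset (Set (ℕ → Bool)))
    (hP : ∀ n, IsPartition (P n)) (hQ : ∀ n, IsPartition (Q n))
    (hPdec : ∀ n, ∀ b ∈ P (n + 1), ∃ a ∈ P n, b ⊆ a)
    (hQdec : ∀ n, ∀ b ∈ Q (n + 1), ∃ a ∈ Q n, b ⊆ a)
    (hPnull : Filter.Tendsto (fun n => mesh (↑(P n) : Set (Set (ℕ → Bool))))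
      Filter.atTop (nhds 0))
    (hQnull : Filter.Tendsto (fun n => mesh (↑(Q n) : Set (Set (ℕ → Bool))))
      Filter.atTop (nhds 0))
    (ν μ : ℕ → Set (ℕ → Bool) → Set (ℕ → Bool))
    (hνmem : ∀ n, ∀ a ∈ P n, ν n a ∈ Q n)
    (hμmem : ∀ n, ∀ c ∈ Q n, μ n c ∈ P n)
    (hνμ : ∀ n, ∀ a ∈ P n, μ n (ν n a) = a)
    (hμν : ∀ n, ∀ c ∈ Q n, ν n (μ n c) = c)
    (hiso : ∀ n, ∀ a ∈ P n, ∀ b ∈ P n,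
      (gammaEdge f a b ↔ gammaEdge g (ν n a) (ν n b)))
    (hνasym : Filter.Tendsto (fun n =>
      mesh ((fun a => ⋃ m, ⋃ _ : n ≤ m, ⋃ b ∈ {b | b ∈ P m ∧ b ⊆ a}, ν m b) ''
        (↑(P n) : Set (Set (ℕ → Bool))))) Filter.atTop (nhds 0))
    (hμasym : Filter.Tendsto (fun n =>
      mesh ((fun c => ⋃ m, ⋃ _ : n ≤ m, ⋃ d ∈ {d | d ∈ Q m ∧ d ⊆ c}, μ m d) ''
        (↑(Q n) : Set (Set (ℕ → Bool))))) Filter.atTop (nhds 0)) :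
    ∃ h : (ℕ → Bool) ≃ₜ (ℕ → Bool), ∀ σ, f σ = h.symm (g (h σ)) := by
  obtain ⟨h, hcont, Hh⟩ := key P Q hP hQ hPdec ν hνmem hνasym
  obtain ⟨h', hcont', Hh'⟩ := key Q P hQ hP hQdec μ hμmem hμasym
  have hli : ∀ σ, h' (h σ) = σ :=
    key_leftInv P Q hP hQ hPdec hQdec ν μ hνmem hνμ h h' Hh Hh'
  have hri : ∀ τ, h (h' τ) = τ :=
    key_leftInv Q P hQ hP hQdec hPdec μ ν hμmem hμν h' h Hh' Hh
  have hconj : ∀ σ, h (f σ) = g (h σ) := key_conj f g hg P Q hP ν hiso h Hh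
  refine ⟨⟨⟨h, h', hli, hri⟩, hcont, hcont'⟩, fun σ => ?_⟩
  show f σ = h' (g (h σ))
  rw [← hconj σ, hli]
end
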